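/- arXiv:1803.06806 — 6 statements merged into one kernel-verified Lean document; each statement's English description precedes it below -/
import Mathlib

section
/- Let λ = (λ_1 > λ_2 > ⋯ > λ_m > 0) be a strict partition with m parts and column sequence c_1, c_2, …, c_{λ_1}. Then there exists an integer k with 0 ≤ k ≤ m such that ∑_{i=1}^{k} (−1)^i c_i = ∑_{i=1}^{λ_1} (−1)^i c_i. -/
/-- The `i`-th entry (1-indexed) of a list of naturals, defaulting to `0`. -/
def entry (d : List ℕ) (i : ℕ) : ℕ := d.getD (i - 1) 0

/-- The alternating partial sum `∑_{i=1}^{m} (−1)^i d_i` of a list `d`. -/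
def altSum (d : List ℕ) (m : ℕ) : ℤ :=
  ∑ i ∈ Finset.Icc 1 m, (-1 : ℤ) ^ i * (entry d i : ℤ)

/-- `d = (d_1, …, d_l)` is an `(a,b)`-sequence: it is a list of positive integers with
`l ≥ b ≥ 1`, `d_i = a + i` for `1 ≤ i ≤ b`, `d_b ≥ d_{b+1} ≥ ⋯ ≥ d_l ≥ 1`, and
`∑_{i=1}^{l} (−1)^i d_i = 0`. -/
def IsABSeq (a b : ℕ) (d : List ℕ) : Prop :=
  1 ≤ b ∧ b ≤ d.length ∧
  (∀ i, 1 ≤ i → i ≤ d.length → 1 ≤ entry d i) ∧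
  (∀ i, 1 ≤ i → i ≤ b → entry d i = a + i) ∧
  (∀ i j, b ≤ i → i ≤ j → j ≤ d.length → entry d j ≤ entry d i) ∧
  altSum d d.length = 0

/-- An (ordinary) partition, recorded as a weakly decreasing list of positive parts. -/
def IsPartitionList (L : List ℕ) : Prop :=
  L.Pairwise (· ≥ ·) ∧ ∀ x ∈ L, 0 < x

/-- A strict partition: a strictly decreasing list of positive parts. -/
def IsStrictPartition (L : List ℕ) : Prop :=
  L.Pairwise (· > ·) ∧ ∀ x ∈ L, 0 < x

/-- The column sequence of the shifted Young diagram of a strict partition `L`: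
`colSeq L j = #{ i : 1 ≤ i ≤ m, i ≤ j ≤ λ_i + i − 1 }`. -/
def colSeq (L : List ℕ) (j : ℕ) : ℕ :=
  ((Finset.Icc 1 L.length).filter (fun i => i ≤ j ∧ j ≤ entry L i + i - 1)).card

/-- The BG-rank of a partition: the number of odd-indexed odd parts minus
the number of even-indexed odd parts (indices starting at 1). -/
def bgRank (L : List ℕ) : ℤ :=
  (((Finset.Icc 1 L.length).filter (fun i => Odd i ∧ Odd (entry L i))).card : ℤ) -
  (((Finset.Icc 1 L.length).filter (fun i => Even i ∧ Odd (entry L i))).card : ℤ)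

/-- `qj j n`: the number of strict partitions of `n` whose BG-rank equals `j`. -/
noncomputable def qj (j : ℤ) (n : ℕ) : ℕ :=
  Set.ncard {L : List ℕ | IsStrictPartition L ∧ L.sum = n ∧ bgRank L = j}

lemma sumAltEven (t : ℕ) : ∑ i ∈ Finset.Icc 1 (2*t), (-1:ℤ)^i * i = t := by
  induction t with
  | zero => simp
  | succ t ih =>
      have h1 : 2*(t+1) = (2*t+1)+1 := by ring
      rw [h1, Finset.sum_Icc_succ_top (by omega), Finset.sum_Icc_succ_top (by omega), ih]
      have h2 : ((-1:ℤ))^(2*t+1) = -1 := Odd.neg_one_pow ⟨t, by ring⟩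
      have h3 : ((-1:ℤ))^(2*t+1+1) = 1 := Even.neg_one_pow ⟨t+1, by ring⟩
      rw [h2, h3]; push_cast; ring

lemma sumAltOdd (t : ℕ) : ∑ i ∈ Finset.Icc 1 (2*t+1), (-1:ℤ)^i * i = -(t+1) := by
  rw [Finset.sum_Icc_succ_top (by omega), sumAltEven]
  have h2 : ((-1:ℤ))^(2*t+1) = -1 := Odd.neg_one_pow ⟨t, by ring⟩
  rw [h2]; push_cast; ring

lemma existsK (m : ℕ) (S : ℤ) (h1 : -(m+1 : ℤ) ≤ 2*S) (h2 : 2*S ≤ m) :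
    ∃ k ≤ m, (∑ i ∈ Finset.Icc 1 k, (-1:ℤ)^i * i) = S := by
  rcases le_or_gt 0 S with hS | hS
  · exact ⟨2*S.toNat, by omega, by rw [sumAltEven]; omega⟩
  · refine ⟨2*((-S).toNat - 1)+1, by omega, ?_⟩
    rw [sumAltOdd]; omega

lemma altTail (c : ℕ → ℤ) (hc : ∀ j, 0 ≤ c j) :
    ∀ k a, (∀ i j, a+1 ≤ i → i ≤ j → j ≤ a+k → c j ≤ c i) →
      0 ≤ (-1:ℤ)^(a+1) * ∑ j ∈ Finset.Icc (a+1) (a+k), (-1:ℤ)^j * c j ∧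
      (-1:ℤ)^(a+1) * ∑ j ∈ Finset.Icc (a+1) (a+k), (-1:ℤ)^j * c j ≤ c (a+1) := by
  intro k
  induction k with
  | zero =>
      intro a _
      have h : Finset.Icc (a+1) (a+0) = ∅ := by
        apply Finset.Icc_eq_empty; omega
      rw [h]; simp [hc]
  | succ k ih =>
      intro a hmono
      have hset : Finset.Icc (a+1) (a+(k+1)) = insert (a+1) (Finset.Icc (a+2) ((a+1)+k)) := by
        ext x; simp only [Finset.mem_Icc, Finset.mem_insert]; omega
      rw [hset, Finset.sum_insert (by simp)]
      obtain ⟨ih1, ih2⟩ := ih (a+1) (fun i j hi hij hj => hmono i j (by omega) hij (by omega))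
      set R := ∑ j ∈ Finset.Icc (a+2) ((a+1)+k), (-1:ℤ)^j * c j with hR
      have hs : ((-1:ℤ))^(a+1) * ((-1:ℤ))^(a+1) = 1 := by
        rw [← pow_add]
        exact Even.neg_one_pow ⟨a+1, rfl⟩
      have hs2 : ((-1:ℤ))^(a+1+1) = -((-1:ℤ))^(a+1) := by rw [pow_succ]; ring
      rw [hs2] at ih1 ih2
      have hVc : -((-1:ℤ)^(a+1) * R) ≤ c (a+1) := by
        rcases Nat.eq_zero_or_pos k with hk | hk
        · subst hk
          have : Finset.Icc (a+2) (a+1) = ∅ := by apply Finset.Icc_eq_empty; omega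
          rw [hR, this]; simpa using hc (a+1)
        · have h9 : c (a+2) ≤ c (a+1) := hmono (a+1) (a+2) le_rfl (by omega) (by omega)
          have h10 : c (a+1+1) = c (a+2) := by norm_num
          rw [h10] at ih2
          linarith
      constructor
      · have : ((-1:ℤ))^(a+1) * ((-1:ℤ)^(a+1) * c (a+1) + R)
            = c (a+1) + (-1:ℤ)^(a+1) * R := by
          rw [mul_add, ← mul_assoc, hs]; ring
        rw [this]; linarith
      · have : ((-1:ℤ))^(a+1) * ((-1:ℤ)^(a+1) * c (a+1) + R)
            = c (a+1) + (-1:ℤ)^(a+1) * R := by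
          rw [mul_add, ← mul_assoc, hs]; ring
        rw [this]; linarith

/-- The claim in Lemma 3.1: for a strict partition `λ` with `m` parts and column sequence
`c_1, …, c_{λ_1}`, there is `0 ≤ k ≤ m` with
`∑_{i=1}^{k} (−1)^i c_i = ∑_{i=1}^{λ_1} (−1)^i c_i`. -/
theorem exists_initial_altSum_eq (L : List ℕ) (hL : IsStrictPartition L) :
    ∃ k : ℕ, k ≤ L.length ∧
      ∑ i ∈ Finset.Icc 1 k, (-1 : ℤ) ^ i * (colSeq L i : ℤ) =
      ∑ i ∈ Finset.Icc 1 (entry L 1), (-1 : ℤ) ^ i * (colSeq L i : ℤ) := by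
  by_cases hm : L.length = 0
  · have hnil : L = [] := List.length_eq_zero_iff.mp hm
    subst hnil
    exact ⟨0, le_rfl, by simp [entry]⟩
  have hm1 : 1 ≤ L.length := Nat.pos_of_ne_zero hm
  have hentry : ∀ i, 1 ≤ i → i ≤ L.length → ∀ h : i - 1 < L.length, entry L i = L.get ⟨i-1, h⟩ := by
    intro i h1 h2 h
    simp only [entry, List.getD_eq_getElem L 0 h, List.get_eq_getElem]
  have hent_pos : ∀ i, 1 ≤ i → i ≤ L.length → 1 ≤ entry L i := by
    intro i h1 h2
    have h : i - 1 < L.length := by omega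
    rw [hentry i h1 h2 h]
    exact hL.2 _ (List.get_mem L _)
  have hstep : ∀ i, 1 ≤ i → i + 1 ≤ L.length → entry L (i+1) < entry L i := by
    intro i h1 h2
    have hi : i - 1 < L.length := by omega
    have hj : i + 1 - 1 < L.length := by omega
    rw [hentry i h1 (by omega) hi, hentry (i+1) (by omega) h2 hj]
    exact List.Pairwise.rel_get_of_lt hL.1 (by simp; omega)
  have hchain : ∀ d i, 1 ≤ i → i + d ≤ L.length → entry L (i+d) + d ≤ entry L i := by
    intro d
    induction d with
    | zero => simp
    | succ d ih =>
        intro i h1 h2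
        have h3 := ih (i+1) (by omega) (by omega)
        have h4 := hstep i h1 (by omega)
        rw [show i+(d+1) = (i+1)+d from by ring]
        omega
  have hlb : ∀ i, 1 ≤ i → i ≤ L.length → L.length + 1 ≤ entry L i + i := by
    intro i h1 h2
    have h3 := hchain (L.length - i) i h1 (by omega)
    rw [show i + (L.length - i) = L.length from by omega] at h3
    have h4 := hent_pos L.length hm1 le_rfl
    omega
  have hcol_eq : ∀ j, 1 ≤ j → j ≤ L.length → colSeq L j = j := by
    intro j h1 h2
    unfold colSeq
    have hfil : (Finset.Icc 1 L.length).filter (fun i => i ≤ j ∧ j ≤ entry L i + i - 1)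
        = Finset.Icc 1 j := by
      ext i
      simp only [Finset.mem_filter, Finset.mem_Icc]
      constructor
      · rintro ⟨⟨a, _⟩, c, _⟩; exact ⟨a, c⟩
      · rintro ⟨a, b⟩
        have h5 := hlb i a (le_trans b h2)
        exact ⟨⟨a, le_trans b h2⟩, b, by omega⟩
    rw [hfil, Nat.card_Icc]; omega
  have hcol_le : ∀ j, colSeq L j ≤ L.length := by
    intro j
    calc colSeq L j ≤ (Finset.Icc 1 L.length).card := Finset.card_filter_le _ _
    _ = L.length := by rw [Nat.card_Icc]; omega
  have hcol_anti : ∀ i j, L.length ≤ i → i ≤ j → colSeq L j ≤ colSeq L i := by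
    intro i j hi hij
    apply Finset.card_le_card
    intro x hx
    simp only [Finset.mem_filter, Finset.mem_Icc] at hx ⊢
    obtain ⟨⟨a, b⟩, c, d⟩ := hx
    exact ⟨⟨a, b⟩, by omega, by omega⟩
  set n := entry L 1 with hn
  have hmn : L.length ≤ n := by have := hlb 1 le_rfl hm1; omega
  -- tail bounds
  obtain ⟨ht1, ht2⟩ := altTail (fun j => (colSeq L j : ℤ)) (fun j => by positivity)
    (n - L.length) L.length
    (fun i j h1 h2 h3 => by simpa using (Nat.cast_le (α := ℤ)).2 (hcol_anti i j (by omega) h2))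
  rw [show L.length + (n - L.length) = n from by omega] at ht1 ht2
  set T := ∑ j ∈ Finset.Icc (L.length+1) n, (-1:ℤ)^j * (colSeq L j : ℤ) with hT
  -- split the total sum
  have hsplit : ∑ i ∈ Finset.Icc 1 n, (-1:ℤ)^i * (colSeq L i : ℤ)
      = (∑ i ∈ Finset.Icc 1 L.length, (-1:ℤ)^i * (colSeq L i : ℤ)) + T := by
    rw [hT, show Finset.Icc 1 n = Finset.Ioc 0 n from Finset.Icc_add_one_left_eq_Ioc 0 n,
      show Finset.Icc 1 L.length = Finset.Ioc 0 L.length from Finset.Icc_add_one_left_eq_Ioc 0 L.length,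
      show Finset.Icc (L.length+1) n = Finset.Ioc L.length n from Finset.Icc_add_one_left_eq_Ioc L.length n]
    exact (Finset.sum_Ioc_consecutive _ (Nat.zero_le _) hmn).symm
  have hP : ∑ i ∈ Finset.Icc 1 L.length, (-1:ℤ)^i * (colSeq L i : ℤ)
      = ∑ i ∈ Finset.Icc 1 L.length, (-1:ℤ)^i * (i : ℤ) := by
    refine Finset.sum_congr rfl fun i hi => ?_
    rw [Finset.mem_Icc] at hi
    rw [hcol_eq i hi.1 hi.2]
  set S := (∑ i ∈ Finset.Icc 1 L.length, (-1:ℤ)^i * (i : ℤ)) + T with hS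
  have hcolm1 : (colSeq L (L.length + 1) : ℤ) ≤ (L.length : ℤ) := by
    exact_mod_cast hcol_le (L.length + 1)
  have hbounds : -((L.length : ℤ)+1) ≤ 2*S ∧ 2*S ≤ (L.length : ℤ) := by
    rcases Nat.even_or_odd L.length with ⟨t, ht⟩ | ⟨t, ht⟩
    · have hA : ∑ i ∈ Finset.Icc 1 L.length, (-1:ℤ)^i * (i : ℤ) = t := by
        rw [show L.length = 2*t from by omega]; exact sumAltEven t
      have hsgn : ((-1:ℤ))^(L.length+1) = -1 :=
        Odd.neg_one_pow ⟨t, by omega⟩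
      rw [hsgn] at ht1 ht2
      have hml : (L.length : ℤ) = 2*t := by exact_mod_cast (by omega : L.length = 2*t)
      constructor <;> [skip; skip] <;> rw [hS, hA] <;> linarith
    · have hA : ∑ i ∈ Finset.Icc 1 L.length, (-1:ℤ)^i * (i : ℤ) = -((t:ℤ)+1) := by
        rw [show L.length = 2*t+1 from by omega]; exact sumAltOdd t
      have hsgn : ((-1:ℤ))^(L.length+1) = 1 :=
        Even.neg_one_pow ⟨t+1, by omega⟩
      rw [hsgn, one_mul] at ht1 ht2
      have hml : (L.length : ℤ) = 2*t+1 := by exact_mod_cast (by omega : L.length = 2*t+1)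
      constructor <;> rw [hS, hA] <;> linarith
  obtain ⟨k, hk, hkS⟩ := existsK L.length S hbounds.1 hbounds.2
  refine ⟨k, hk, ?_⟩
  have hLHS : ∑ i ∈ Finset.Icc 1 k, (-1:ℤ)^i * (colSeq L i : ℤ)
      = ∑ i ∈ Finset.Icc 1 k, (-1:ℤ)^i * (i : ℤ) := by
    refine Finset.sum_congr rfl fun i hi => ?_
    rw [Finset.mem_Icc] at hi
    rw [hcol_eq i hi.1 (le_trans hi.2 hk)]
  rw [hLHS, hkS, hsplit, hP]
end

section
/- Let λ = (λ_1 > λ_2 > ⋯ > λ_m > 0) be a strict partition with column sequence c_1, c_2, …, c_{λ_1}. Then the BG-rank of λ satisfies r(λ) = ∑_{j=1}^{λ_1} (−1)^{j+1} c_j, i.e., the BG-rank equals the negative of the alternating sum ∑_{j=1}^{λ_1} (−1)^j c_j. -/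
lemma entry_eq_get (L : List ℕ) (i : ℕ) (h : i - 1 < L.length) :
    entry L i = L[i-1] := by
  simp [entry, List.getD_eq_getElem?_getD, List.getElem?_eq_getElem h]

lemma entry_pos (L : List ℕ) (hL : IsStrictPartition L) (i : ℕ) (h1 : 1 ≤ i)
    (h2 : i ≤ L.length) : 1 ≤ entry L i := by
  have h : i - 1 < L.length := by omega
  rw [entry_eq_get L i h]
  exact hL.2 _ (List.getElem_mem h)

lemma entry_succ_lt (L : List ℕ) (hL : IsStrictPartition L) (i : ℕ) (h1 : 1 ≤ i)
    (h2 : i + 1 ≤ L.length) : entry L (i + 1) < entry L i := by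
  have ha : i - 1 < L.length := by omega
  have hb : i + 1 - 1 < L.length := by omega
  rw [entry_eq_get L i ha, entry_eq_get L (i+1) hb]
  exact hL.1.rel_get_of_lt (a := ⟨i - 1, ha⟩) (b := ⟨i, hb⟩) (by simp [Fin.lt_def]; omega)

lemma entry_add_le (L : List ℕ) (hL : IsStrictPartition L) :
    ∀ i, 1 ≤ i → i ≤ L.length → entry L i + i ≤ entry L 1 + 1 := by
  intro i
  induction i with
  | zero => omega
  | succ n ih =>
    intro _ h2
    rcases Nat.eq_zero_or_pos n with rfl | hn
    · simp
    · have h3 := entry_succ_lt L hL n hn (by omega)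
      have := ih hn (by omega)
      omega

lemma alt_Ico (a k : ℕ) :
    ∑ j ∈ Finset.Ico a (a + k), (-1 : ℤ) ^ (j + 1) =
      if Odd k then (-1 : ℤ) ^ (a + 1) else 0 := by
  induction k with
  | zero => simp
  | succ k ih =>
    rw [show a + (k + 1) = (a + k) + 1 from rfl,
      Finset.sum_Ico_succ_top (Nat.le_add_right a k), ih]
    rcases Nat.even_or_odd k with hk | hk
    · obtain ⟨t, rfl⟩ := hk
      have h1 : ¬ Odd (t + t) := by simp [Nat.even_add]
      have h2 : Odd (t + t + 1) := by simp [Nat.even_add, parity_simps]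
      simp only [h1, h2, if_false, if_true, zero_add]
      rw [show a + (t + t) + 1 = (a + 1) + 2 * t by ring, pow_add, pow_mul]
      simp
    · obtain ⟨t, rfl⟩ := hk
      have h1 : Odd (2 * t + 1) := ⟨t, rfl⟩
      have h2 : ¬ Odd (2 * t + 1 + 1) := by simp [Nat.even_add, parity_simps]
      simp only [h1, h2, if_false, if_true]
      rw [show a + (2 * t + 1) + 1 = (a + 1) + (2 * t + 1) by ring, pow_add]
      rw [show a + 1 + (2 * t + 1) = a + 2 * (t + 1) by ring, pow_add, pow_mul]
      ring


/-- Remark 3.3: for a strict partition `λ` with column sequence `c_1, …, c_{λ_1}`,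
the BG-rank satisfies `r(λ) = ∑_{j=1}^{λ_1} (−1)^{j+1} c_j`. -/
theorem bgRank_eq_neg_alt_colSum (L : List ℕ) (hL : IsStrictPartition L) :
    bgRank L = ∑ j ∈ Finset.Icc 1 (entry L 1), (-1 : ℤ) ^ (j + 1) * (colSeq L j : ℤ) := by
  have key : ∀ j, (colSeq L j : ℤ) =
      ∑ i ∈ Finset.Icc 1 L.length,
        (if i ≤ j ∧ j ≤ entry L i + i - 1 then (1 : ℤ) else 0) := by
    intro j
    rw [colSeq, Finset.card_filter]
    push_cast
    rfl
  simp only [key, Finset.mul_sum]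
  rw [Finset.sum_comm]
  have step : ∀ i ∈ Finset.Icc 1 L.length,
      (∑ j ∈ Finset.Icc 1 (entry L 1),
        (-1 : ℤ) ^ (j + 1) * (if i ≤ j ∧ j ≤ entry L i + i - 1 then (1:ℤ) else 0)) =
      if Odd (entry L i) then (-1 : ℤ) ^ (i + 1) else 0 := by
    intro i hi
    simp only [Finset.mem_Icc] at hi
    have hpos := entry_pos L hL i hi.1 hi.2
    have hbd := entry_add_le L hL i hi.1 hi.2
    have hfil : (Finset.Icc 1 (entry L 1)).filter
        (fun j => i ≤ j ∧ j ≤ entry L i + i - 1) = Finset.Ico i (i + entry L i) := by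
      ext j
      simp only [Finset.mem_filter, Finset.mem_Icc, Finset.mem_Ico]
      omega
    calc ∑ j ∈ Finset.Icc 1 (entry L 1),
          (-1 : ℤ) ^ (j + 1) * (if i ≤ j ∧ j ≤ entry L i + i - 1 then (1:ℤ) else 0)
        = ∑ j ∈ Finset.Icc 1 (entry L 1),
          (if i ≤ j ∧ j ≤ entry L i + i - 1 then (-1 : ℤ) ^ (j + 1) else 0) := by
          refine Finset.sum_congr rfl fun j _ => ?_
          split <;> simp
      _ = ∑ j ∈ Finset.Ico i (i + entry L i), (-1 : ℤ) ^ (j + 1) := by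
          rw [← Finset.sum_filter, hfil]
      _ = if Odd (entry L i) then (-1 : ℤ) ^ (i + 1) else 0 := alt_Ico i (entry L i)
  rw [Finset.sum_congr rfl step]
  rw [bgRank, Finset.card_filter, Finset.card_filter]
  push_cast
  rw [← Finset.sum_sub_distrib]
  refine Finset.sum_congr rfl fun i _ => ?_
  rcases Nat.even_or_odd i with hi | hi
  · have h1 : ¬ Odd i := Nat.not_odd_iff_even.mpr hi
    by_cases h : Odd (entry L i) <;>
      simp [h, hi, h1, pow_succ, Even.neg_one_pow hi]
  · have h1 : ¬ Even i := Nat.not_even_iff_odd.mpr hi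
    by_cases h : Odd (entry L i) <;>
      simp [h, hi, h1, pow_succ, Odd.neg_one_pow hi]
end

section
/- Let k, m, n be integers with k > 0, m > 2k − 1, and n ≥ m(m+1)/2. Then the number of strict partitions of n with exactly m parts and BG-rank equal to k equals the number of (2k−1, m−2k+1)-sequences Δ with |Δ| = n − k(2k−1). -/
namespace BG

lemma entry_eq_getElem (L : List ℕ) (i : ℕ) (h1 : 1 ≤ i) (h2 : i ≤ L.length) :
    entry L i = L[i-1]'(by omega) := by
  simp [entry, List.getD_eq_getElem?_getD, List.getElem?_eq_getElem (show i-1 < L.length by omega)]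

lemma entry_eq_zero (L : List ℕ) (i : ℕ) (h2 : L.length < i) : entry L i = 0 := by
  have h : L.length ≤ i - 1 := by omega
  rw [entry, List.getD_eq_default _ _ h]

lemma entry_ofFn {n : ℕ} (f : Fin n → ℕ) (i : ℕ) (h1 : 1 ≤ i) (h2 : i ≤ n) :
    entry (List.ofFn f) i = f ⟨i - 1, by omega⟩ := by
  rw [entry_eq_getElem _ i h1 (by simpa using h2)]
  simp [List.getElem_ofFn]

lemma sum_Icc_shift {M : Type*} [AddCommMonoid M] (f : ℕ → M) (a n : ℕ) :
    ∑ i ∈ Finset.Icc (a+1) (a+n), f i = ∑ i ∈ Finset.range n, f (a+1+i) := by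
  rw [← Finset.Ico_add_one_right_eq_Icc, Finset.sum_Ico_eq_sum_range]
  apply Finset.sum_congr (by congr 1; omega) (fun i _ => rfl)

lemma sum_Icc_one {M : Type*} [AddCommMonoid M] (f : ℕ → M) (n : ℕ) :
    ∑ i ∈ Finset.Icc 1 n, f i = ∑ i ∈ Finset.range n, f (1+i) := by
  simpa using sum_Icc_shift f 0 n

lemma sum_getD (L : List ℕ) : ∑ j ∈ Finset.range L.length, L.getD j 0 = L.sum := by
  induction L with
  | nil => simp
  | cons a L ih =>
    rw [List.length_cons, Finset.sum_range_succ']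
    simp only [List.getD_cons_succ, List.getD_cons_zero, List.sum_cons]
    rw [ih]; ring

lemma entry_sum (L : List ℕ) : ∑ i ∈ Finset.Icc 1 L.length, entry L i = L.sum := by
  rw [sum_Icc_one, ← sum_getD L]
  exact Finset.sum_congr rfl (fun i _ => by simp [entry])

end BG

namespace BG

lemma entry_strict {L : List ℕ} (hL : L.Pairwise (· > ·)) {i j : ℕ} (h1 : 1 ≤ i)
    (hij : i < j) (hj : j ≤ L.length) : entry L j < entry L i := by
  rw [entry_eq_getElem L i h1 (by omega), entry_eq_getElem L j (by omega) hj]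
  exact List.Pairwise.rel_get_of_lt hL (by simp [Fin.lt_def]; omega)

lemma entry_pos {L : List ℕ} (hL : IsStrictPartition L) {i : ℕ} (h1 : 1 ≤ i)
    (hi : i ≤ L.length) : 1 ≤ entry L i := by
  rw [entry_eq_getElem L i h1 hi]
  exact hL.2 _ (List.getElem_mem _)

lemma entry_gap {L : List ℕ} (hL : L.Pairwise (· > ·)) (t : ℕ) :
    ∀ i, 1 ≤ i → i + t ≤ L.length → entry L (i + t) + t ≤ entry L i := by
  induction t with
  | zero => simp
  | succ t ih =>
    intro i h1 hlen
    have h2 : entry L (i + t + 1) < entry L (i + t) := entry_strict hL (by omega) (by omega) (by omega)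
    have := ih i h1 (by omega)
    show entry L (i + t + 1) + (t + 1) ≤ entry L i
    omega

/-- `entry L i + i ≥ m + 1`, i.e. the shifted row ends at column ≥ m. -/
lemma rowEnd_ge {L : List ℕ} (hL : IsStrictPartition L) {i : ℕ} (h1 : 1 ≤ i)
    (hi : i ≤ L.length) : L.length + 1 ≤ entry L i + i := by
  have h := entry_gap hL.1 (L.length - i) i h1 (by omega)
  rw [show i + (L.length - i) = L.length by omega] at h
  have := entry_pos hL (show 1 ≤ L.length by omega) (le_refl _)
  omega

/-- row ends are weakly decreasing. -/
lemma rowEnd_anti {L : List ℕ} (hL : L.Pairwise (· > ·)) {i j : ℕ} (h1 : 1 ≤ i)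
    (hij : i ≤ j) (hj : j ≤ L.length) : entry L j + j ≤ entry L i + i := by
  have := entry_gap hL (j - i) i h1 (by omega)
  have h : i + (j - i) = j := by omega
  rw [h] at this
  omega

/-- Key characterization: `colSeq L j ≥ i ↔ i ≤ j ≤ λ_i + i - 1`. -/
lemma colSeq_ge_iff {L : List ℕ} (hL : IsStrictPartition L) {i j : ℕ} (h1 : 1 ≤ i)
    (hi : i ≤ L.length) : i ≤ colSeq L j ↔ (i ≤ j ∧ j ≤ entry L i + i - 1) := by
  constructor
  · intro h
    by_contra hc
    rcases Nat.lt_or_ge j i with hji | hji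
    · -- j < i : the filter is contained in Icc 1 j
      have hsub : (Finset.Icc 1 L.length).filter (fun i' => i' ≤ j ∧ j ≤ entry L i' + i' - 1)
          ⊆ Finset.Icc 1 j := by
        intro x hx
        simp only [Finset.mem_filter, Finset.mem_Icc] at hx ⊢
        exact ⟨hx.1.1, hx.2.1⟩
      have := Finset.card_le_card hsub
      rw [Nat.card_Icc] at this
      unfold colSeq at h
      omega
    · -- i ≤ j, so j > e_i; filter contained in Icc 1 (i-1)
      have hji2 : entry L i + i - 1 < j := by omega
      have hsub : (Finset.Icc 1 L.length).filter (fun i' => i' ≤ j ∧ j ≤ entry L i' + i' - 1)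
          ⊆ Finset.Icc 1 (i - 1) := by
        intro x hx
        simp only [Finset.mem_filter, Finset.mem_Icc] at hx ⊢
        refine ⟨hx.1.1, ?_⟩
        by_contra hxi
        have hxi' : i ≤ x := by omega
        have := rowEnd_anti hL.1 h1 hxi' hx.1.2
        have hp := entry_pos hL h1 hi
        omega
      have := Finset.card_le_card hsub
      rw [Nat.card_Icc] at this
      unfold colSeq at h
      omega
  · rintro ⟨hij, hje⟩
    have hsub : Finset.Icc 1 i ⊆
        (Finset.Icc 1 L.length).filter (fun i' => i' ≤ j ∧ j ≤ entry L i' + i' - 1) := by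
      intro x hx
      simp only [Finset.mem_Icc] at hx
      have hx2 : x ≤ L.length := by omega
      have hre := rowEnd_anti hL.1 hx.1 hx.2 hi
      have hp := entry_pos hL hx.1 hx2
      have hp2 := entry_pos hL h1 hi
      simp only [Finset.mem_filter, Finset.mem_Icc]
      exact ⟨⟨hx.1, hx2⟩, by omega, by omega⟩
    have := Finset.card_le_card hsub
    rw [Nat.card_Icc] at this
    unfold colSeq
    omega

lemma colSeq_le (L : List ℕ) (j : ℕ) : colSeq L j ≤ j := by
  have hsub : (Finset.Icc 1 L.length).filter (fun i' => i' ≤ j ∧ j ≤ entry L i' + i' - 1)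
      ⊆ Finset.Icc 1 j := by
    intro x hx
    simp only [Finset.mem_filter, Finset.mem_Icc] at hx ⊢
    exact ⟨hx.1.1, hx.2.1⟩
  have := Finset.card_le_card hsub
  rw [Nat.card_Icc] at this
  unfold colSeq
  omega

lemma colSeq_le_len (L : List ℕ) (j : ℕ) : colSeq L j ≤ L.length := by
  have := Finset.card_filter_le (Finset.Icc 1 L.length)
    (fun i' => i' ≤ j ∧ j ≤ entry L i' + i' - 1)
  unfold colSeq
  rw [Nat.card_Icc] at this
  omega

lemma colSeq_eq_self {L : List ℕ} (hL : IsStrictPartition L) {j : ℕ} (h1 : 1 ≤ j)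
    (hj : j ≤ L.length) : colSeq L j = j := by
  have h := (colSeq_ge_iff hL h1 hj).2 ⟨le_refl j, by
    have := rowEnd_ge hL h1 hj; omega⟩
  have := colSeq_le L j
  omega

lemma colSeq_eq_zero {L : List ℕ} (hL : IsStrictPartition L) (hlen : 1 ≤ L.length) {j : ℕ}
    (hj : entry L 1 < j) : colSeq L j = 0 := by
  by_contra h
  have h1 : 1 ≤ colSeq L j := by omega
  have := (colSeq_ge_iff hL (le_refl 1) hlen).1 h1
  omega

lemma colSeq_pos {L : List ℕ} (hL : IsStrictPartition L) (hlen : 1 ≤ L.length) {j : ℕ}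
    (h1 : 1 ≤ j) (hj : j ≤ entry L 1) : 1 ≤ colSeq L j :=
  (colSeq_ge_iff hL (le_refl 1) hlen).2 ⟨h1, by omega⟩

lemma colSeq_anti {L : List ℕ} (hL : IsStrictPartition L) {j j' : ℕ} (hj : L.length ≤ j)
    (hjj : j ≤ j') : colSeq L j' ≤ colSeq L j := by
  rcases Nat.eq_zero_or_pos (colSeq L j') with h | h
  · omega
  have hlen : 1 ≤ L.length := by
    by_contra hl
    have : L.length = 0 := by omega
    unfold colSeq at h
    simp [this] at h
  set i := colSeq L j' with hi
  have hile : i ≤ L.length := colSeq_le_len L j'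
  have := (colSeq_ge_iff hL h hile).1 (le_refl i)
  exact (colSeq_ge_iff hL h hile).2 ⟨by omega, by omega⟩

end BG

namespace BG

lemma alt_sum_Icc (i t : ℕ) :
    ∑ j ∈ Finset.Icc i (i + t), (-1 : ℤ) ^ j = if Even t then (-1) ^ i else 0 := by
  induction t with
  | zero => simp
  | succ t ih =>
    rw [show i + (t + 1) = (i + t) + 1 from rfl,
      Finset.sum_Icc_succ_top (by omega : i ≤ i + t + 1), ih]
    rcases Nat.even_or_odd t with h | h
    · have ht1 : ¬ Even (t + 1) := by rcases h with ⟨c, hc⟩; rintro ⟨r, hr⟩; omega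
      have : ((-1 : ℤ)) ^ (i + t + 1) = -(-1) ^ i := by
        rw [pow_add, pow_add, h.neg_one_pow, pow_one]; ring
      simp [h, ht1, this]
    · have ht1 : Even (t + 1) := by rcases h with ⟨c, rfl⟩; exact ⟨c + 1, by ring⟩
      have hnt : ¬ Even t := by rcases h with ⟨c, rfl⟩; rintro ⟨r, hr⟩; omega
      have : ((-1 : ℤ)) ^ (i + t + 1) = (-1) ^ i := by
        rw [pow_add, pow_add, h.neg_one_pow, pow_one]; ring
      simp [hnt, ht1, this]

lemma alt_triangle (k : ℕ) :
    ∑ j ∈ Finset.Icc 1 (2 * k - 1), (-1 : ℤ) ^ j * j = -(k : ℤ) := by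
  induction k with
  | zero => simp
  | succ k ih =>
    rcases Nat.eq_zero_or_pos k with rfl | hk
    · simp
    rw [show 2 * (k + 1) - 1 = (2 * k - 1) + 1 + 1 by omega,
      Finset.sum_Icc_succ_top (by omega), Finset.sum_Icc_succ_top (by omega), ih]
    have h2k : (2 * k - 1) + 1 = 2 * k := by omega
    rw [h2k]
    have he : ((-1 : ℤ)) ^ (2 * k) = 1 := Even.neg_one_pow ⟨k, by ring⟩
    have ho : ((-1 : ℤ)) ^ (2 * k + 1) = -1 := by rw [pow_succ, he]; ring
    rw [he, ho]
    push_cast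
    ring

lemma sum_triangle (k : ℕ) :
    ∑ j ∈ Finset.Icc 1 (2 * k - 1), j = k * (2 * k - 1) := by
  induction k with
  | zero => simp
  | succ k ih =>
    rcases Nat.eq_zero_or_pos k with rfl | hk
    · simp
    rw [show 2 * (k + 1) - 1 = (2 * k - 1) + 1 + 1 by omega,
      Finset.sum_Icc_succ_top (by omega), Finset.sum_Icc_succ_top (by omega), ih]
    obtain ⟨c, rfl⟩ := Nat.exists_eq_add_of_le hk
    rw [show 2 * (1 + c) - 1 = 2 * c + 1 by omega]
    simp only [Nat.succ_eq_add_one]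
    ring

lemma sum_colSeq {L : List ℕ} (hL : IsStrictPartition L) (hlen : 1 ≤ L.length) {N : ℕ}
    (hN : entry L 1 ≤ N) : ∑ j ∈ Finset.Icc 1 N, colSeq L j = L.sum := by
  calc ∑ j ∈ Finset.Icc 1 N, colSeq L j
      = ∑ j ∈ Finset.Icc 1 N, ∑ i ∈ Finset.Icc 1 L.length,
          if i ≤ j ∧ j ≤ entry L i + i - 1 then 1 else 0 := by
        exact Finset.sum_congr rfl fun j _ => by rw [colSeq, Finset.card_filter]
    _ = ∑ i ∈ Finset.Icc 1 L.length, ∑ j ∈ Finset.Icc 1 N,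
          if i ≤ j ∧ j ≤ entry L i + i - 1 then 1 else 0 := Finset.sum_comm
    _ = ∑ i ∈ Finset.Icc 1 L.length, entry L i := by
        refine Finset.sum_congr rfl fun i hi => ?_
        simp only [Finset.mem_Icc] at hi
        have hre := rowEnd_anti hL.1 (le_refl 1) hi.1 hi.2
        have hp := entry_pos hL hi.1 hi.2
        rw [← Finset.card_filter]
        have hset : (Finset.Icc 1 N).filter (fun j => i ≤ j ∧ j ≤ entry L i + i - 1)
            = Finset.Icc i (entry L i + i - 1) := by
          ext j
          simp only [Finset.mem_filter, Finset.mem_Icc]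
          omega
        rw [hset, Nat.card_Icc]
        omega
    _ = L.sum := entry_sum L

lemma alt_colSeq {L : List ℕ} (hL : IsStrictPartition L) (hlen : 1 ≤ L.length) {N : ℕ}
    (hN : entry L 1 ≤ N) :
    ∑ j ∈ Finset.Icc 1 N, (-1 : ℤ) ^ j * (colSeq L j : ℤ) = -bgRank L := by
  calc ∑ j ∈ Finset.Icc 1 N, (-1 : ℤ) ^ j * (colSeq L j : ℤ)
      = ∑ j ∈ Finset.Icc 1 N, ∑ i ∈ Finset.Icc 1 L.length,
          (if i ≤ j ∧ j ≤ entry L i + i - 1 then (-1 : ℤ) ^ j else 0) := by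
        refine Finset.sum_congr rfl fun j _ => ?_
        rw [colSeq, Finset.card_filter]
        push_cast
        rw [Finset.mul_sum]
        exact Finset.sum_congr rfl fun i _ => by split <;> simp
    _ = ∑ i ∈ Finset.Icc 1 L.length, ∑ j ∈ Finset.Icc 1 N,
          (if i ≤ j ∧ j ≤ entry L i + i - 1 then (-1 : ℤ) ^ j else 0) := Finset.sum_comm
    _ = ∑ i ∈ Finset.Icc 1 L.length, (if Odd (entry L i) then (-1 : ℤ) ^ i else 0) := by
        refine Finset.sum_congr rfl fun i hi => ?_
        simp only [Finset.mem_Icc] at hi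
        have hre := rowEnd_anti hL.1 (le_refl 1) hi.1 hi.2
        have hp := entry_pos hL hi.1 hi.2
        rw [← Finset.sum_filter]
        have hset : (Finset.Icc 1 N).filter (fun j => i ≤ j ∧ j ≤ entry L i + i - 1)
            = Finset.Icc i (i + (entry L i - 1)) := by
          ext j
          simp only [Finset.mem_filter, Finset.mem_Icc]
          omega
        rw [hset, alt_sum_Icc]
        have hparity : Even (entry L i - 1) ↔ Odd (entry L i) := by
          rcases Nat.even_or_odd (entry L i) with h | h
          · constructor
            · intro he
              exfalso
              rcases h with ⟨c, hc⟩
              rcases he with ⟨r, hr⟩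
              omega
            · intro ho; exact absurd ho (by simpa using h)
          · constructor
            · intro _; exact h
            · intro _
              rcases h with ⟨c, hc⟩
              exact ⟨c, by omega⟩
        by_cases hodd : Odd (entry L i)
        · simp [hodd, hparity.2 hodd]
        · have h1 : ¬ Even (entry L i - 1) := fun he => hodd (hparity.1 he)
          simp [hodd, h1]
    _ = -bgRank L := by
        have hpt : ∀ i ∈ Finset.Icc 1 L.length,
            (if Odd (entry L i) then (-1 : ℤ) ^ i else 0)
            = (if Even i ∧ Odd (entry L i) then (1 : ℤ) else 0)
              - (if Odd i ∧ Odd (entry L i) then (1 : ℤ) else 0) := by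
          intro i _
          rcases Nat.even_or_odd i with h | h
          · have h2 : ¬ Odd i := by simpa using h
            by_cases ho : Odd (entry L i) <;> simp [h, h2, ho, h.neg_one_pow]
          · have h2 : ¬ Even i := by rcases h with ⟨c, rfl⟩; rintro ⟨r, hr⟩; omega
            by_cases ho : Odd (entry L i) <;> simp [h, h2, ho, h.neg_one_pow]
        rw [Finset.sum_congr rfl hpt, Finset.sum_sub_distrib]
        rw [Finset.sum_boole, Finset.sum_boole, bgRank]
        push_cast
        ring

end BG

namespace BG

def fwd (a : ℕ) (L : List ℕ) : List ℕ :=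
  List.ofFn (fun t : Fin (entry L 1 - a) => colSeq L (a + 1 + (t : ℕ)))

lemma fwd_length (a : ℕ) (L : List ℕ) : (fwd a L).length = entry L 1 - a := by
  simp [fwd]

lemma fwd_entry (a : ℕ) (L : List ℕ) {i : ℕ} (h1 : 1 ≤ i) (h2 : i ≤ entry L 1 - a) :
    entry (fwd a L) i = colSeq L (a + i) := by
  rw [fwd, entry_ofFn _ i h1 h2]
  congr 1
  show a + 1 + (i - 1) = a + i
  omega

/-- Splitting an `Icc 1 (a+l)` sum at `a`. -/
lemma sum_split {M : Type*} [AddCommMonoid M] (f : ℕ → M) (a l : ℕ) :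
    ∑ j ∈ Finset.Icc 1 (a + l), f j
      = (∑ j ∈ Finset.Icc 1 a, f j) + ∑ j ∈ Finset.Icc (a + 1) (a + l), f j := by
  have h1 : Finset.Icc 1 (a + l) = Finset.Ioc 0 (a + l) := Finset.Icc_add_one_left_eq_Ioc 0 (a + l)
  have h2 : Finset.Icc 1 a = Finset.Ioc 0 a := Finset.Icc_add_one_left_eq_Ioc 0 a
  have h3 : Finset.Icc (a + 1) (a + l) = Finset.Ioc a (a + l) := Finset.Icc_add_one_left_eq_Ioc a (a + l)
  rw [h1, h2, h3, Finset.sum_Ioc_consecutive f (Nat.zero_le a) (Nat.le_add_right a l)]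

section Forward

variable {k b : ℕ} {L : List ℕ}

lemma lambda1_ge (hL : IsStrictPartition L) {m : ℕ} (hlen : L.length = m) (hm : 1 ≤ m) :
    m ≤ entry L 1 := by
  have := rowEnd_ge hL (i := 1) (by omega) (by omega)
  omega

variable (hk : 0 < k) (hL : IsStrictPartition L) (hlen : L.length = 2 * k - 1 + b) (hb : 1 ≤ b)
include hk hL hlen hb

lemma fwd_altRel : (bgRank L : ℤ) = (k : ℤ) + altSum (fwd (2 * k - 1) L) (entry L 1 - (2 * k - 1)) := by
  set a := 2 * k - 1 with hadef
  have hodd : Odd a := ⟨k - 1, by omega⟩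
  have hlam1 : a + b ≤ entry L 1 := lambda1_ge hL hlen (by omega)
  have hm1 : 1 ≤ L.length := by omega
  set l := entry L 1 - a with hldef
  have hal : a + l = entry L 1 := by omega
  have hA : ∑ j ∈ Finset.Icc 1 (a + l), (-1 : ℤ) ^ j * (colSeq L j : ℤ) = -bgRank L :=
    alt_colSeq hL hm1 (by omega)
  rw [sum_split] at hA
  have htri : ∑ j ∈ Finset.Icc 1 a, (-1 : ℤ) ^ j * (colSeq L j : ℤ) = -(k : ℤ) := by
    rw [← alt_triangle k, ← hadef]
    refine Finset.sum_congr rfl fun j hj => ?_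
    simp only [Finset.mem_Icc] at hj
    rw [colSeq_eq_self hL hj.1 (by omega)]
  have e1 : altSum (fwd a L) l
      = ∑ i ∈ Finset.range l, (-1 : ℤ) ^ (1 + i) * (colSeq L (a + 1 + i) : ℤ) := by
    rw [altSum, sum_Icc_one]
    refine Finset.sum_congr rfl fun i hi => ?_
    simp only [Finset.mem_range] at hi
    rw [fwd_entry a L (by omega) (by omega), show a + (1 + i) = a + 1 + i by omega]
  have e2 : ∑ j ∈ Finset.Icc (a + 1) (a + l), (-1 : ℤ) ^ j * (colSeq L j : ℤ)
      = - altSum (fwd a L) l := by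
    rw [sum_Icc_shift, e1, ← Finset.sum_neg_distrib]
    refine Finset.sum_congr rfl fun i _ => ?_
    have hpow : ((-1 : ℤ)) ^ (a + 1 + i) = -(-1 : ℤ) ^ (1 + i) := by
      rw [show a + 1 + i = a + (1 + i) by omega, pow_add, hodd.neg_one_pow]
      ring
    rw [hpow]
    ring
  rw [htri, e2] at hA
  omega

lemma fwd_isABSeq (hbg : bgRank L = k) : IsABSeq (2 * k - 1) b (fwd (2 * k - 1) L) := by
  set a := 2 * k - 1 with hadef
  have hlam1 : a + b ≤ entry L 1 := lambda1_ge hL hlen (by omega)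
  have hlf : (fwd a L).length = entry L 1 - a := fwd_length a L
  have hm1 : 1 ≤ L.length := by omega
  refine ⟨hb, by omega, ?_, ?_, ?_, ?_⟩
  · intro i h1 h2
    rw [fwd_entry a L h1 (by omega)]
    exact colSeq_pos hL hm1 (by omega) (by omega)
  · intro i h1 h2
    rw [fwd_entry a L h1 (by omega)]
    exact colSeq_eq_self hL (by omega) (by omega)
  · intro i j hbi hij hjl
    have hi1 : 1 ≤ i := by omega
    rw [fwd_entry a L hi1 (by omega), fwd_entry a L (by omega) (by omega)]
    exact colSeq_anti hL (by omega) (by omega)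
  · have hrel := fwd_altRel hk hL hlen hb
    rw [hbg] at hrel
    rw [hlf, hadef]
    omega

lemma fwd_sum : k * (2 * k - 1) + (fwd (2 * k - 1) L).sum = L.sum := by
  set a := 2 * k - 1 with hadef
  have hlam1 : a + b ≤ entry L 1 := lambda1_ge hL hlen (by omega)
  have hm1 : 1 ≤ L.length := by omega
  set l := entry L 1 - a with hldef
  have hal : a + l = entry L 1 := by omega
  have hA : ∑ j ∈ Finset.Icc 1 (a + l), colSeq L j = L.sum := sum_colSeq hL hm1 (by omega)
  rw [sum_split] at hA
  have htri : ∑ j ∈ Finset.Icc 1 a, colSeq L j = k * (2 * k - 1) := by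
    rw [← sum_triangle k, ← hadef]
    refine Finset.sum_congr rfl fun j hj => ?_
    simp only [Finset.mem_Icc] at hj
    exact colSeq_eq_self hL hj.1 (by omega)
  have hsum : (fwd a L).sum = ∑ j ∈ Finset.Icc (a + 1) (a + l), colSeq L j := by
    rw [sum_Icc_shift, fwd, List.sum_ofFn, ← hldef]
    exact Fin.sum_univ_eq_sum_range (fun i => colSeq L (a + 1 + i)) l
  rw [htri, ← hsum] at hA
  exact hA

end Forward

end BG

namespace BG

lemma colSeq_recover {L : List ℕ} (hL : IsStrictPartition L) {i : ℕ} (h1 : 1 ≤ i)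
    (hi : i ≤ L.length) :
    entry L i = ((Finset.Icc 1 (entry L 1)).filter (fun j => i ≤ colSeq L j)).card := by
  have hre := rowEnd_anti hL.1 (le_refl 1) h1 hi
  have hp := entry_pos hL h1 hi
  have hset : (Finset.Icc 1 (entry L 1)).filter (fun j => i ≤ colSeq L j)
      = Finset.Icc i (entry L i + i - 1) := by
    ext j
    simp only [Finset.mem_filter, Finset.mem_Icc, colSeq_ge_iff hL h1 hi]
    omega
  rw [hset, Nat.card_Icc]
  omega

lemma fwd_injOn {k b : ℕ} (hk : 0 < k) (hb : 1 ≤ b) {L L' : List ℕ}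
    (hL : IsStrictPartition L) (hlen : L.length = 2 * k - 1 + b)
    (hL' : IsStrictPartition L') (hlen' : L'.length = 2 * k - 1 + b)
    (hf : fwd (2 * k - 1) L = fwd (2 * k - 1) L') : L = L' := by
  set a := 2 * k - 1 with hadef
  have hlam1 : a + b ≤ entry L 1 := lambda1_ge hL hlen (by omega)
  have hlam1' : a + b ≤ entry L' 1 := lambda1_ge hL' hlen' (by omega)
  have hll : entry L 1 - a = entry L' 1 - a := by
    have := congrArg List.length hf
    rwa [fwd_length, fwd_length] at this
  have h11 : entry L 1 = entry L' 1 := by omega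
  have hcol : ∀ j, 1 ≤ j → j ≤ entry L 1 → colSeq L j = colSeq L' j := by
    intro j hj1 hj2
    rcases le_or_gt j a with hja | hja
    · rw [colSeq_eq_self hL hj1 (by omega), colSeq_eq_self hL' hj1 (by omega)]
    · have e1 := fwd_entry a L (i := j - a) (by omega) (by omega)
      have e2 := fwd_entry a L' (i := j - a) (by omega) (by omega)
      rw [show a + (j - a) = j by omega] at e1 e2
      rw [← e1, ← e2, hf]
  have hent : ∀ i, 1 ≤ i → i ≤ L.length → entry L i = entry L' i := by
    intro i h1 hi
    rw [colSeq_recover hL h1 hi, colSeq_recover hL' h1 (by omega)]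
    rw [← h11]
    congr 1
    apply Finset.filter_congr
    intro j hj
    simp only [Finset.mem_Icc] at hj
    rw [hcol j hj.1 hj.2]
  apply List.ext_getElem (by omega)
  intro idx hi1 hi2
  have := hent (idx + 1) (by omega) (by omega)
  rw [entry_eq_getElem L (idx + 1) (by omega) (by omega),
    entry_eq_getElem L' (idx + 1) (by omega) (by omega)] at this
  simpa using this

end BG

namespace BG

def Dcard (d : List ℕ) (b i : ℕ) : ℕ :=
  ((Finset.Icc (b + 1) d.length).filter (fun t => i ≤ entry d t)).card

def bwd (a b : ℕ) (d : List ℕ) : List ℕ :=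
  List.ofFn (fun i0 : Fin (a + b) => (a + b - (i0 : ℕ)) + Dcard d b ((i0 : ℕ) + 1))

lemma bwd_length (a b : ℕ) (d : List ℕ) : (bwd a b d).length = a + b := by
  simp [bwd]

lemma bwd_entry (a b : ℕ) (d : List ℕ) {i : ℕ} (h1 : 1 ≤ i) (h2 : i ≤ a + b) :
    entry (bwd a b d) i = (a + b - (i - 1)) + Dcard d b i := by
  rw [bwd, entry_ofFn _ i h1 h2]
  show (a + b - (i - 1)) + Dcard d b ((i - 1) + 1) = _
  rw [show i - 1 + 1 = i by omega]

section Backward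

variable {a b : ℕ} {d : List ℕ} (hd : IsABSeq a b d)
include hd

lemma entry_le_ab {t : ℕ} (ht : 1 ≤ t) : entry d t ≤ a + b := by
  obtain ⟨hb1, hbl, hpos, hinit, hanti, halt⟩ := hd
  rcases le_or_gt t b with h | h
  · rw [hinit t ht h]; omega
  · rcases le_or_gt t d.length with h2 | h2
    · have := hanti b t (le_refl b) (by omega) h2
      rw [hinit b hb1 (le_refl b)] at this
      omega
    · rw [entry_eq_zero d t h2]; omega

lemma Dcard_le (i : ℕ) : Dcard d b i ≤ d.length - b := by
  have := Finset.card_filter_le (Finset.Icc (b + 1) d.length) (fun t => i ≤ entry d t)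
  rw [Nat.card_Icc] at this
  unfold Dcard
  omega

lemma Dcard_one : Dcard d b 1 = d.length - b := by
  obtain ⟨hb1, hbl, hpos, hinit, hanti, halt⟩ := hd
  unfold Dcard
  have hfull : ∀ t ∈ Finset.Icc (b + 1) d.length, 1 ≤ entry d t := by
    intro t ht
    simp only [Finset.mem_Icc] at ht
    exact hpos t (by omega) ht.2
  rw [Finset.filter_true_of_mem hfull, Nat.card_Icc]
  omega

omit hd in
lemma Dcard_anti {i i' : ℕ} (h : i ≤ i') : Dcard d b i' ≤ Dcard d b i := by
  apply Finset.card_le_card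
  intro t ht
  simp only [Finset.mem_filter] at ht ⊢
  exact ⟨ht.1, le_trans h ht.2⟩

lemma Dconj {i s : ℕ} (h1 : 1 ≤ i) (hs : 1 ≤ s) :
    s ≤ Dcard d b i ↔ i ≤ entry d (b + s) := by
  obtain ⟨hb1, hbl, hpos, hinit, hanti, halt⟩ := hd
  constructor
  · intro h
    by_contra hc
    push_neg at hc
    have hsub : (Finset.Icc (b + 1) d.length).filter (fun t => i ≤ entry d t)
        ⊆ Finset.Icc (b + 1) (b + s - 1) := by
      intro t ht
      simp only [Finset.mem_filter, Finset.mem_Icc] at ht ⊢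
      refine ⟨ht.1.1, ?_⟩
      by_contra htc
      have := hanti (b + s) t (by omega) (by omega) ht.1.2
      omega
    have := Finset.card_le_card hsub
    rw [Nat.card_Icc] at this
    unfold Dcard at h
    omega
  · intro h
    have hbs : b + s ≤ d.length := by
      by_contra hc
      rw [entry_eq_zero d _ (by omega)] at h
      omega
    have hsub : Finset.Icc (b + 1) (b + s)
        ⊆ (Finset.Icc (b + 1) d.length).filter (fun t => i ≤ entry d t) := by
      intro t ht
      simp only [Finset.mem_Icc] at ht
      simp only [Finset.mem_filter, Finset.mem_Icc]
      have := hanti t (b + s) (by omega) (by omega) hbs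
      exact ⟨⟨ht.1, by omega⟩, by omega⟩
    have := Finset.card_le_card hsub
    rw [Nat.card_Icc] at this
    unfold Dcard
    omega

lemma Dcount {s : ℕ} (hs : 1 ≤ s) :
    ((Finset.Icc 1 (a + b)).filter (fun i => s ≤ Dcard d b i)).card = entry d (b + s) := by
  have hle : entry d (b + s) ≤ a + b := entry_le_ab hd (by omega)
  have hset : (Finset.Icc 1 (a + b)).filter (fun i => s ≤ Dcard d b i)
      = Finset.Icc 1 (entry d (b + s)) := by
    ext i
    simp only [Finset.mem_filter, Finset.mem_Icc]
    constructor
    · rintro ⟨⟨hi1, _⟩, h⟩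
      exact ⟨hi1, (Dconj hd hi1 hs).1 h⟩
    · rintro ⟨hi1, h⟩
      exact ⟨⟨hi1, by omega⟩, (Dconj hd hi1 hs).2 h⟩
  rw [hset, Nat.card_Icc]
  omega

lemma bwd_strict : IsStrictPartition (bwd a b d) := by
  obtain ⟨hb1, hbl, hpos, hinit, hanti, halt⟩ := hd
  constructor
  · apply List.pairwise_ofFn.2
    intro i j hij
    have hD : Dcard d b ((j : ℕ) + 1) ≤ Dcard d b ((i : ℕ) + 1) := Dcard_anti (by omega)
    have hi2 := i.2
    have hj2 := j.2
    have : (i : ℕ) < (j : ℕ) := hij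
    omega
  · intro x hx
    rw [bwd, List.mem_ofFn] at hx
    obtain ⟨i0, rfl⟩ := hx
    have := i0.2
    omega

lemma bwd_entry1 : entry (bwd a b d) 1 = a + d.length := by
  have hD1 := Dcard_one hd
  obtain ⟨hb1, hbl, hpos, hinit, hanti, halt⟩ := hd
  rw [bwd_entry a b d (le_refl 1) (by omega)]
  rw [show (1 : ℕ) - 1 = 0 from rfl, hD1]
  omega

lemma bwd_colSeq {j : ℕ} (hj : a + 1 ≤ j) : colSeq (bwd a b d) j = entry d (j - a) := by
  have hL := bwd_strict hd
  have hlenL := bwd_length a b d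
  obtain ⟨hb1, hbl, hpos, hinit, hanti, halt⟩ := hd
  rcases le_or_gt j (a + b) with hjm | hjm
  · rw [colSeq_eq_self hL (by omega) (by omega)]
    rw [hinit (j - a) (by omega) (by omega)]
    omega
  · unfold colSeq
    rw [hlenL]
    have hfe : (Finset.Icc 1 (a + b)).filter
          (fun i => i ≤ j ∧ j ≤ entry (bwd a b d) i + i - 1)
        = (Finset.Icc 1 (a + b)).filter (fun i => (j - (a + b)) ≤ Dcard d b i) := by
      apply Finset.filter_congr
      intro i hi
      simp only [Finset.mem_Icc] at hi
      rw [bwd_entry a b d hi.1 hi.2]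
      constructor
      · rintro ⟨_, h2⟩
        omega
      · intro h
        constructor
        · omega
        · omega
    rw [hfe]
    have := Dcount ⟨hb1, hbl, hpos, hinit, hanti, halt⟩ (s := j - (a + b)) (by omega)
    rw [this]
    congr 1
    omega

lemma fwd_bwd : fwd a (bwd a b d) = d := by
  have hL := bwd_strict hd
  have hlenL := bwd_length a b d
  have h1 := bwd_entry1 hd
  have hbl := hd.2.1
  have hlenf : (fwd a (bwd a b d)).length = d.length := by
    rw [fwd_length, h1]
    omega
  apply List.ext_getElem (by rw [hlenf])
  intro idx hi1 hi2
  have he : entry (fwd a (bwd a b d)) (idx + 1) = entry d (idx + 1) := by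
    rw [fwd_entry a _ (by omega) (by rw [h1]; rw [fwd_length, h1] at hi1; omega)]
    rw [bwd_colSeq hd (by omega), show a + (idx + 1) - a = idx + 1 by omega]
  rw [entry_eq_getElem (fwd a (bwd a b d)) (idx + 1) (by omega) (by omega),
    entry_eq_getElem d (idx + 1) (by omega) (by omega)] at he
  simpa using he

end Backward

end BG

open BG


/-- Theorem 3.4(1): for `k > 0`, `m > 2k − 1`, `n ≥ m(m+1)/2`, the number of strict
partitions of `n` with exactly `m` parts and BG-rank `k` equals the number of
`(2k−1, m−2k+1)`-sequences `Δ` with `|Δ| = n − k(2k−1)`. -/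
theorem strict_bg_count_case1 (k m n : ℕ) (hk : 0 < k) (hm : 2 * k - 1 < m)
    (hn : m * (m + 1) / 2 ≤ n) :
    Set.ncard {L : List ℕ | IsStrictPartition L ∧ L.length = m ∧ L.sum = n ∧
      bgRank L = (k : ℤ)} =
    Set.ncard {d : List ℕ | IsABSeq (2 * k - 1) (m - 2 * k + 1) d ∧
      d.sum = n - k * (2 * k - 1)} := by
  have hb1 : 1 ≤ m - 2 * k + 1 := by omega
  have hnk : k * (2 * k - 1) ≤ n := by
    have h1 : 2 * k * (2 * k + 1) / 2 ≤ m * (m + 1) / 2 :=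
      Nat.div_le_div_right (Nat.mul_le_mul (by omega) (by omega))
    have h2 : 2 * k * (2 * k + 1) = 2 * (k * (2 * k + 1)) := by ring
    have h3 : 2 * (k * (2 * k + 1)) / 2 = k * (2 * k + 1) :=
      Nat.mul_div_cancel_left _ (by norm_num)
    have h4 : k * (2 * k + 1) = k * (2 * k - 1) + k * 2 := by
      rw [show 2 * k + 1 = (2 * k - 1) + 2 by omega, Nat.mul_add]
    omega
  have himg : fwd (2 * k - 1) '' {L : List ℕ | IsStrictPartition L ∧ L.length = m ∧ L.sum = n ∧
      bgRank L = (k : ℤ)} = {d : List ℕ | IsABSeq (2 * k - 1) (m - 2 * k + 1) d ∧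
      d.sum = n - k * (2 * k - 1)} := by
    apply Set.Subset.antisymm
    · rintro d ⟨L, ⟨hLs, hLl, hLsum, hLbg⟩, rfl⟩
      have hlen' : L.length = 2 * k - 1 + (m - 2 * k + 1) := by omega
      refine ⟨fwd_isABSeq hk hLs hlen' hb1 hLbg, ?_⟩
      have := fwd_sum hk hLs hlen' hb1
      omega
    · rintro d ⟨hdab, hdsum⟩
      refine ⟨bwd (2 * k - 1) (m - 2 * k + 1) d, ⟨bwd_strict hdab, ?_, ?_, ?_⟩,
        fwd_bwd hdab⟩
      · rw [bwd_length]; omega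
      · have hlen'' : (bwd (2 * k - 1) (m - 2 * k + 1) d).length
            = 2 * k - 1 + (m - 2 * k + 1) := bwd_length _ _ _
        have := fwd_sum hk (bwd_strict hdab) hlen'' hb1
        rw [fwd_bwd hdab] at this
        omega
      · have hlen'' : (bwd (2 * k - 1) (m - 2 * k + 1) d).length
            = 2 * k - 1 + (m - 2 * k + 1) := bwd_length _ _ _
        have hrel := fwd_altRel hk (bwd_strict hdab) hlen'' hb1
        rw [fwd_bwd hdab, bwd_entry1 hdab,
          show 2 * k - 1 + d.length - (2 * k - 1) = d.length by omega] at hrel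
        rw [hrel, hdab.2.2.2.2.2]
        ring
  have hinj : Set.InjOn (fwd (2 * k - 1)) {L : List ℕ | IsStrictPartition L ∧ L.length = m ∧
      L.sum = n ∧ bgRank L = (k : ℤ)} := by
    rintro L1 ⟨h1s, h1l, _, _⟩ L2 ⟨h2s, h2l, _, _⟩ hf
    exact fwd_injOn hk hb1 h1s (by omega) h2s (by omega) hf
  rw [← himg]
  exact (Set.ncard_image_of_injOn hinj).symm
end

section
/- Let k, n be integers with k > 0 and n ≥ k(2k−1), and set m = 2k − 1. Then the number of strict partitions of n with exactly m parts and BG-rank equal to k equals the number of partitions λ with largest part at most 2k − 1 and 2|λ| = n − k(2k−1). -/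
namespace BG

/-- forward map: from a partition `μ` with parts ≤ 2k-1 build the strict partition. -/
def gmap (k : ℕ) (μ : List ℕ) : List ℕ :=
  (List.range (2*k-1)).map (fun i => (2*k - 1 - i) + 2 * (μ.countP (fun x => decide (i + 1 ≤ x))))

lemma length_gmap (k : ℕ) (μ : List ℕ) : (gmap k μ).length = 2*k-1 := by simp [gmap]

lemma entry_gmap (k : ℕ) (μ : List ℕ) (i : ℕ) (h1 : 1 ≤ i) (h2 : i ≤ 2*k-1) :
    entry (gmap k μ) i = (2*k - i) + 2 * (μ.countP (fun x => decide (i ≤ x))) := by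
  have hlt : i - 1 < (gmap k μ).length := by rw [length_gmap]; omega
  unfold entry
  rw [List.getD_eq_getElem _ 0 hlt]
  simp only [gmap, List.getElem_map, List.getElem_range]
  have e1 : i - 1 + 1 = i := by omega
  have e2 : 2*k - 1 - (i-1) = 2*k - i := by omega
  rw [e1, e2]

lemma sorted_gmap (k : ℕ) (μ : List ℕ) : (gmap k μ).Pairwise (· > ·) := by
  rw [List.pairwise_iff_getElem]
  intro a b ha hb hab
  simp only [gmap, List.getElem_map, List.getElem_range]
  simp only [gmap, List.length_map, List.length_range] at ha hb
  have hmono : μ.countP (fun x => decide (b + 1 ≤ x)) ≤ μ.countP (fun x => decide (a + 1 ≤ x)) := by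
    apply List.countP_mono_left
    intro x _ hx
    simp only [decide_eq_true_eq] at hx ⊢
    omega
  omega

lemma list_eq_of_entry_eq (L M : List ℕ) (hlen : L.length = M.length)
    (h : ∀ i, 1 ≤ i → i ≤ L.length → entry L i = entry M i) : L = M := by
  apply List.ext_getElem hlen
  intro n h1 h2
  have h3 := h (n+1) (by omega) (by omega)
  unfold entry at h3
  rw [Nat.add_sub_cancel, List.getD_eq_getElem _ 0 h1, List.getD_eq_getElem _ 0 h2] at h3
  exact h3

lemma entry_strict_anti (L : List ℕ) (hs : L.Pairwise (· > ·)) :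
    ∀ d i, 1 ≤ i → i + d ≤ L.length → entry L (i+d) + d ≤ entry L i := by
  intro d
  induction d with
  | zero => intro i h1 h2; simp
  | succ d ih =>
    intro i h1 h2
    have h3 := ih i h1 (by omega)
    have h4 : entry L (i+d+1) < entry L (i+d) := by
      unfold entry
      rw [List.getD_eq_getElem _ 0 (show i+d+1-1 < L.length by omega),
          List.getD_eq_getElem _ 0 (show i+d-1 < L.length by omega)]
      exact List.pairwise_iff_getElem.mp hs _ _ _ _ (by omega)
    have : i + (d+1) = i + d + 1 := by omega
    rw [this]; omega

lemma card_odd_Icc (k : ℕ) (hk : 0 < k) :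
    ((Finset.Icc 1 (2*k-1)).filter (fun i => Odd i)).card = k := by
  induction k with
  | zero => omega
  | succ k ih =>
    rcases Nat.eq_zero_or_pos k with rfl | hk'
    · decide
    · have h1 : Finset.Icc 1 (2*(k+1)-1) = insert (2*k) (insert (2*k+1) (Finset.Icc 1 (2*k-1))) := by
        ext i; simp [Finset.mem_Icc, Finset.mem_insert]; omega
      rw [h1, Finset.filter_insert, Finset.filter_insert]
      have h2 : ¬ Odd (2*k) := by simp [Nat.odd_iff]
      have h3 : Odd (2*k+1) := by simp [Nat.odd_iff]
      rw [if_neg h2, if_pos h3,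
        Finset.card_insert_of_notMem (by simp [Finset.mem_Icc]), ih hk']

lemma bg_gmap (k : ℕ) (μ : List ℕ) (hk : 0 < k) : bgRank (gmap k μ) = k := by
  unfold bgRank
  rw [length_gmap]
  have h1 : (Finset.Icc 1 (2*k-1)).filter (fun i => Odd i ∧ Odd (entry (gmap k μ) i))
      = (Finset.Icc 1 (2*k-1)).filter (fun i => Odd i) := by
    apply Finset.filter_congr
    intro i hi
    simp only [Finset.mem_Icc] at hi
    rw [entry_gmap k μ i hi.1 hi.2]
    simp only [Nat.odd_iff]
    constructor
    · rintro ⟨h, _⟩; exact h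
    · intro h; exact ⟨h, by omega⟩
  have h2 : (Finset.Icc 1 (2*k-1)).filter (fun i => Even i ∧ Odd (entry (gmap k μ) i))
      = ∅ := by
    rw [Finset.filter_eq_empty_iff]
    intro i hi
    simp only [Finset.mem_Icc] at hi
    rw [entry_gmap k μ i hi.1 hi.2]
    simp only [Nat.even_iff, Nat.odd_iff]
    rintro ⟨h, h'⟩
    omega
  rw [h1, h2, card_odd_Icc k hk]
  simp

lemma sum_count_aux (m : ℕ) (μ : List ℕ) (h : ∀ x ∈ μ, x ≤ m) :
    ∑ i ∈ Finset.range m, μ.countP (fun x => decide (i + 1 ≤ x)) = μ.sum := by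
  induction μ with
  | nil => simp
  | cons a l ih =>
    simp only [List.countP_cons, List.sum_cons]
    rw [Finset.sum_add_distrib, ih (fun x hx => h x (List.mem_cons_of_mem a hx))]
    have ha : a ≤ m := h a (List.mem_cons_self)
    simp only [decide_eq_true_eq]
    have hc : ∑ i ∈ Finset.range m, (if i+1 ≤ a then 1 else 0) = a := by
      rw [← Finset.card_filter]
      have : (Finset.range m).filter (fun i => i+1 ≤ a) = Finset.range a := by
        ext i; simp [Finset.mem_range, Finset.mem_filter]; omega
      rw [this, Finset.card_range]
    omega

lemma list_sum_map_range (n : ℕ) (f : ℕ → ℕ) :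
    ((List.range n).map f).sum = ∑ i ∈ Finset.range n, f i := by
  induction n with
  | zero => simp
  | succ n ih => rw [Finset.sum_range_succ, List.range_succ, List.map_append,
      List.sum_append, ih]; simp

lemma staircase_sum (k : ℕ) (hk : 0 < k) :
    ∑ i ∈ Finset.range (2*k-1), (2*k-1-i) = k*(2*k-1) := by
  obtain ⟨j, rfl⟩ := Nat.exists_eq_add_of_lt hk
  simp only [zero_add]
  have hm : 2*(j+1)-1 = 2*j+1 := by omega
  rw [hm]
  have h1 : ∀ i ∈ Finset.range (2*j+1), 2*j+1-i = (2*j+1-1-i) + 1 := by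
    intro i hi; simp only [Finset.mem_range] at hi; omega
  rw [Finset.sum_congr rfl h1, Finset.sum_add_distrib,
    Finset.sum_range_reflect (fun i => i) (2*j+1)]
  have h2 := Finset.sum_range_id_mul_two (2*j+1)
  have h3 : 2*j+1-1 = 2*j := by omega
  rw [h3] at h2
  apply Nat.eq_of_mul_eq_mul_left (show 0 < 2 by norm_num)
  calc 2*((∑ i ∈ Finset.range (2*j+1), i) + ∑ _i ∈ Finset.range (2*j+1), 1)
      = (∑ i ∈ Finset.range (2*j+1), i)*2 + 2*(2*j+1) := by simp; ring
    _ = (2*j+1)*(2*j) + 2*(2*j+1) := by rw [h2]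
    _ = 2*((j+1)*(2*j+1)) := by ring

lemma sum_gmap (k : ℕ) (μ : List ℕ) (hk : 0 < k) (h : ∀ x ∈ μ, x ≤ 2*k-1) :
    (gmap k μ).sum = k*(2*k-1) + 2 * μ.sum := by
  unfold gmap
  rw [list_sum_map_range, Finset.sum_add_distrib, ← Finset.mul_sum,
    sum_count_aux (2*k-1) μ h, staircase_sum k hk]

/-- column count at level `j` of the doubled diagram -/
def cnt (k : ℕ) (L : List ℕ) (j : ℕ) : ℕ :=
  ((Finset.Icc 1 (2*k-1)).filter (fun i => 2*j + 2*k ≤ entry L i + i)).card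

/-- inverse map -/
def invL (k : ℕ) (L : List ℕ) : List ℕ :=
  (List.range ((entry L 1 + 1 - 2*k)/2)).map (fun j => cnt k L (j+1))

section Inv

variable {k : ℕ} {L : List ℕ}

lemma entry_plus_mono (hs : L.Pairwise (· > ·)) (i i' : ℕ) (h1 : 1 ≤ i) (h2 : i ≤ i')
    (h3 : i' ≤ L.length) : entry L i' + i' ≤ entry L i + i := by
  have := entry_strict_anti L hs (i' - i) i h1 (by omega)
  have e : i + (i' - i) = i' := by omega
  rw [e] at this
  omega

lemma cnt_iff (hs : L.Pairwise (· > ·)) (hlen : L.length = 2*k-1) (i j : ℕ)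
    (h1 : 1 ≤ i) (h2 : i ≤ 2*k-1) :
    i ≤ cnt k L j ↔ 2*j + 2*k ≤ entry L i + i := by
  constructor
  · intro h
    by_contra hcon
    push_neg at hcon
    have hsub : (Finset.Icc 1 (2*k-1)).filter (fun i => 2*j + 2*k ≤ entry L i + i)
        ⊆ Finset.Icc 1 (i-1) := by
      intro i' hi'
      simp only [Finset.mem_filter, Finset.mem_Icc] at hi' ⊢
      obtain ⟨⟨ha, hb⟩, hc⟩ := hi'
      by_contra hcon2
      have hii' : i ≤ i' := by omega
      have := entry_plus_mono hs i i' h1 hii' (by omega)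
      omega
    have := Finset.card_le_card hsub
    rw [Nat.card_Icc] at this
    unfold cnt at h
    omega
  · intro h
    have hsub : Finset.Icc 1 i ⊆
        (Finset.Icc 1 (2*k-1)).filter (fun i => 2*j + 2*k ≤ entry L i + i) := by
      intro i'' hi''
      simp only [Finset.mem_Icc] at hi''
      simp only [Finset.mem_filter, Finset.mem_Icc]
      refine ⟨⟨hi''.1, by omega⟩, ?_⟩
      have := entry_plus_mono hs i'' i hi''.1 hi''.2 (by omega)
      omega
    have := Finset.card_le_card hsub
    rw [Nat.card_Icc] at this
    unfold cnt
    omega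

lemma countP_lt_range (t N : ℕ) :
    (List.range N).countP (fun j => decide (j < t)) = min t N := by
  induction N with
  | zero => simp
  | succ N ih =>
    rw [List.range_succ, List.countP_append, ih]
    simp only [List.countP_cons, List.countP_nil]
    by_cases h : N < t
    · simp [h]; omega
    · simp [h]; omega


lemma parity_of_bg (hlen : L.length = 2*k-1) (hk : 0 < k) (hbg : bgRank L = (k:ℤ)) :
    ∀ i, 1 ≤ i → i ≤ 2*k-1 → (entry L i + i) % 2 = 0 := by
  have hA : ((Finset.Icc 1 (2*k-1)).filter (fun i => Odd i ∧ Odd (entry L i)))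
      ⊆ (Finset.Icc 1 (2*k-1)).filter (fun i => Odd i) := by
    intro i hi
    simp only [Finset.mem_filter] at hi ⊢
    exact ⟨hi.1, hi.2.1⟩
  have hAcard := Finset.card_le_card hA
  rw [card_odd_Icc k hk] at hAcard
  unfold bgRank at hbg
  rw [hlen] at hbg
  have hAk : ((Finset.Icc 1 (2*k-1)).filter (fun i => Odd i ∧ Odd (entry L i))).card = k ∧
      ((Finset.Icc 1 (2*k-1)).filter (fun i => Even i ∧ Odd (entry L i))).card = 0 := by
    constructor <;> omega
  have hAeq : ((Finset.Icc 1 (2*k-1)).filter (fun i => Odd i ∧ Odd (entry L i)))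
      = (Finset.Icc 1 (2*k-1)).filter (fun i => Odd i) :=
    Finset.eq_of_subset_of_card_le hA (by rw [card_odd_Icc k hk, hAk.1])
  have hBempty := Finset.card_eq_zero.mp hAk.2
  intro i h1 h2
  rcases Nat.even_or_odd i with he | ho
  · -- i even: entry L i even
    have : i ∉ (Finset.Icc 1 (2*k-1)).filter (fun i => Even i ∧ Odd (entry L i)) := by
      rw [hBempty]; simp
    simp only [Finset.mem_filter, Finset.mem_Icc, not_and] at this
    have h3 := this ⟨h1, h2⟩
    have h4 : ¬ Odd (entry L i) := by tauto
    rw [Nat.not_odd_iff_even] at h4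
    rw [Nat.even_iff] at he h4
    omega
  · -- i odd: entry L i odd
    have hmem : i ∈ (Finset.Icc 1 (2*k-1)).filter (fun i => Odd i) := by
      simp only [Finset.mem_filter, Finset.mem_Icc]
      exact ⟨⟨h1, h2⟩, ho⟩
    rw [← hAeq] at hmem
    simp only [Finset.mem_filter] at hmem
    have := hmem.2.2
    rw [Nat.odd_iff] at this ho
    omega


lemma entry_mem (i : ℕ) (h1 : 1 ≤ i) (h2 : i ≤ L.length) : entry L i ∈ L := by
  unfold entry
  rw [List.getD_eq_getElem _ 0 (show i - 1 < L.length by omega)]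
  exact List.getElem_mem _

lemma entry_lb (hs : L.Pairwise (· > ·)) (hpos : ∀ x ∈ L, 0 < x) (hlen : L.length = 2*k-1)
    (hk : 0 < k) (i : ℕ) (h1 : 1 ≤ i) (h2 : i ≤ 2*k-1) : 2*k ≤ entry L i + i := by
  have hm := entry_plus_mono hs i (2*k-1) h1 h2 (by omega)
  have hp : 0 < entry L (2*k-1) := hpos _ (entry_mem (2*k-1) (by omega) (by omega))
  omega

lemma countP_invL (hs : L.Pairwise (· > ·)) (hpos : ∀ x ∈ L, 0 < x) (hlen : L.length = 2*k-1)
    (hk : 0 < k) (hbg : bgRank L = (k:ℤ)) (i : ℕ) (h1 : 1 ≤ i) (h2 : i ≤ 2*k-1) :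
    (invL k L).countP (fun x => decide (i ≤ x)) = (entry L i + i - 2*k)/2 := by
  have hpar := parity_of_bg hlen hk hbg
  have hE := entry_lb hs hpos hlen hk i h1 h2
  have hE1 := entry_lb hs hpos hlen hk 1 (le_refl 1) (by omega)
  have hEpar := hpar i h1 h2
  have hE1par := hpar 1 (le_refl 1) (by omega)
  have hle := entry_plus_mono hs 1 i (le_refl 1) h1 (by omega)
  unfold invL
  rw [List.countP_map]
  have hcongr : ∀ j ∈ List.range ((entry L 1 + 1 - 2*k)/2),
      (((fun x => decide (i ≤ x)) ∘ (fun j => cnt k L (j+1))) j = true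
        ↔ (fun j => decide (j < (entry L i + i - 2*k)/2)) j = true) := by
    intro j hj
    simp only [List.mem_range] at hj
    simp only [Function.comp_apply, decide_eq_true_eq]
    rw [cnt_iff hs hlen i (j+1) h1 h2]
    omega
  rw [List.countP_congr hcongr, countP_lt_range]
  omega

lemma gmap_invL (hs : L.Pairwise (· > ·)) (hpos : ∀ x ∈ L, 0 < x) (hlen : L.length = 2*k-1)
    (hk : 0 < k) (hbg : bgRank L = (k:ℤ)) : gmap k (invL k L) = L := by
  apply list_eq_of_entry_eq _ _ (by rw [length_gmap, hlen])
  intro i hi1 hi2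
  rw [length_gmap] at hi2
  rw [entry_gmap k _ i hi1 hi2, countP_invL hs hpos hlen hk hbg i hi1 hi2]
  have hE := entry_lb hs hpos hlen hk i hi1 hi2
  have hEpar := parity_of_bg hlen hk hbg i hi1 hi2
  omega

lemma invL_sorted (hs : L.Pairwise (· > ·)) : (invL k L).Pairwise (· ≥ ·) := by
  rw [List.pairwise_iff_getElem]
  intro a b ha hb hab
  simp only [invL, List.getElem_map, List.getElem_range]
  apply Finset.card_le_card
  intro x hx
  simp only [cnt, Finset.mem_filter] at hx ⊢
  exact ⟨hx.1, by omega⟩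

lemma invL_pos (hs : L.Pairwise (· > ·)) (hpos : ∀ x ∈ L, 0 < x) (hlen : L.length = 2*k-1)
    (hk : 0 < k) (hbg : bgRank L = (k:ℤ)) : ∀ x ∈ invL k L, 0 < x := by
  intro x hx
  simp only [invL, List.mem_map, List.mem_range] at hx
  obtain ⟨j, hj, rfl⟩ := hx
  have h1 : (1:ℕ) ≤ cnt k L (j+1) := by
    rw [cnt_iff hs hlen 1 (j+1) (le_refl 1) (by omega)]
    have hE1par := parity_of_bg hlen hk hbg 1 (le_refl 1) (by omega)
    omega
  omega

lemma invL_le (hk : 0 < k) : ∀ x ∈ invL k L, x ≤ 2*k-1 := by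
  intro x hx
  simp only [invL, List.mem_map, List.mem_range] at hx
  obtain ⟨j, hj, rfl⟩ := hx
  have := Finset.card_filter_le (Finset.Icc 1 (2*k-1)) (fun i => 2*(j+1) + 2*k ≤ entry L i + i)
  unfold cnt
  rw [Nat.card_Icc] at this
  omega

end Inv

section Inj

lemma count_split (a : ℕ) (l : List ℕ) :
    l.countP (fun x => decide (a ≤ x)) = l.count a + l.countP (fun x => decide (a+1 ≤ x)) := by
  induction l with
  | nil => simp
  | cons x l ih =>
    simp only [List.countP_cons, List.count_cons]
    by_cases h1 : a ≤ x <;> by_cases h2 : a + 1 ≤ x <;> by_cases h3 : x = a <;>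
      simp [h1, h2, h3, ih] <;> omega

lemma gmap_inj (k : ℕ) (hk : 0 < k) (μ μ' : List ℕ)
    (hμs : μ.Pairwise (· ≥ ·)) (hμp : ∀ x ∈ μ, 0 < x) (hμl : ∀ x ∈ μ, x ≤ 2*k-1)
    (hμs' : μ'.Pairwise (· ≥ ·)) (hμp' : ∀ x ∈ μ', 0 < x) (hμl' : ∀ x ∈ μ', x ≤ 2*k-1)
    (heq : gmap k μ = gmap k μ') : μ = μ' := by
  have hF : ∀ i, 1 ≤ i →
      μ.countP (fun x => decide (i ≤ x)) = μ'.countP (fun x => decide (i ≤ x)) := by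
    intro i hi1
    by_cases hi2 : i ≤ 2*k-1
    · have h := congrArg (fun l => entry l i) heq
      simp only [entry_gmap k _ i hi1 hi2] at h
      omega
    · rw [List.countP_eq_zero.mpr, List.countP_eq_zero.mpr]
      · intro x hx; have := hμl' x hx; simp only [decide_eq_true_eq]; omega
      · intro x hx; have := hμl x hx; simp only [decide_eq_true_eq]; omega
  have hcount : ∀ a, μ.count a = μ'.count a := by
    intro a
    rcases Nat.eq_zero_or_pos a with rfl | ha
    · rw [List.count_eq_zero.mpr, List.count_eq_zero.mpr]
      · intro hmem; exact absurd (hμp' 0 hmem) (by omega)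
      · intro hmem; exact absurd (hμp 0 hmem) (by omega)
    · have e1 := count_split a μ
      have e2 := count_split a μ'
      have f1 := hF a ha
      have f2 := hF (a+1) (by omega)
      omega
  have hperm : μ.Perm μ' := List.perm_iff_count.mpr hcount
  haveI : IsAntisymm ℕ (· ≥ ·) := ⟨fun a b h1 h2 => le_antisymm h2 h1⟩
  exact List.Perm.eq_of_pairwise' hμs hμs' hperm

end Inj

end BG


/-- Theorem 3.4(2): for `k > 0`, `n ≥ k(2k−1)`, and `m = 2k − 1`, the number of strict
partitions of `n` with exactly `m` parts and BG-rank `k` equals the number of partitions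
with largest part at most `2k − 1` and `2|λ| = n − k(2k−1)`. -/
theorem strict_bg_count_case2 (k n : ℕ) (hk : 0 < k) (hn : k * (2 * k - 1) ≤ n) :
    Set.ncard {L : List ℕ | IsStrictPartition L ∧ L.length = 2 * k - 1 ∧ L.sum = n ∧
      bgRank L = (k : ℤ)} =
    Set.ncard {μ : List ℕ | IsPartitionList μ ∧ (∀ x ∈ μ, x ≤ 2 * k - 1) ∧
      2 * μ.sum = n - k * (2 * k - 1)} := by
  have hset : {L : List ℕ | IsStrictPartition L ∧ L.length = 2 * k - 1 ∧ L.sum = n ∧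
      bgRank L = (k : ℤ)}
      = BG.gmap k '' {μ : List ℕ | IsPartitionList μ ∧ (∀ x ∈ μ, x ≤ 2 * k - 1) ∧
        2 * μ.sum = n - k * (2 * k - 1)} := by
    ext L
    simp only [Set.mem_setOf_eq, Set.mem_image]
    constructor
    · rintro ⟨⟨hs, hpos⟩, hlen, hsum, hbg⟩
      have hg := BG.gmap_invL hs hpos hlen hk hbg
      have hs2 := BG.sum_gmap k (BG.invL k L) hk (BG.invL_le hk)
      rw [hg, hsum] at hs2
      exact ⟨BG.invL k L,
        ⟨⟨BG.invL_sorted hs, BG.invL_pos hs hpos hlen hk hbg⟩, BG.invL_le hk, by omega⟩, hg⟩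
    · rintro ⟨μ, ⟨⟨hμs, hμp⟩, hμl, hμsum⟩, rfl⟩
      refine ⟨⟨BG.sorted_gmap k μ, ?_⟩, BG.length_gmap k μ, ?_, BG.bg_gmap k μ hk⟩
      · intro x hx
        simp only [BG.gmap, List.mem_map, List.mem_range] at hx
        obtain ⟨i, hi, rfl⟩ := hx
        omega
      · rw [BG.sum_gmap k μ hk hμl]; omega
  rw [hset]
  apply Set.ncard_image_of_injOn
  intro μ hμ μ' hμ' h
  simp only [Set.mem_setOf_eq] at hμ hμ'
  exact BG.gmap_inj k hk μ μ' hμ.1.1 hμ.1.2 hμ.2.1 hμ'.1.1 hμ'.1.2 hμ'.2.1 h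
end

section
/- Let k, m, n be integers with k ≤ 0, m > −2k, and n ≥ m(m+1)/2. Then the number of strict partitions of n with exactly m parts and BG-rank equal to k equals the number of (−2k, m+2k)-sequences Δ with |Δ| = n − k(2k−1). -/
lemma entry_eq_getElem (L : List ℕ) (i : ℕ) (h1 : 1 ≤ i) (h2 : i ≤ L.length) :
    entry L i = L[i-1]'(by omega) := by
  simp [entry, List.getD_eq_getElem?_getD, List.getElem?_eq_getElem (by omega : i - 1 < L.length)]


lemma sum_getD (L : List ℕ) : ∑ i ∈ Finset.range L.length, L.getD i 0 = L.sum := by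
  induction L with
  | nil => simp
  | cons a l ih =>
    rw [List.length_cons, Finset.sum_range_succ']
    simp only [List.getD_cons_succ, List.getD_cons_zero, List.sum_cons, ih]
    ring

lemma Icc_one_sum {M : Type*} [AddCommMonoid M] (n : ℕ) (f : ℕ → M) :
    ∑ i ∈ Finset.Icc 1 n, f i = ∑ i ∈ Finset.range n, f (1 + i) := by
  rw [← Finset.Ico_add_one_right_eq_Icc, Finset.sum_Ico_eq_sum_range]
  simp

lemma entry_sum (L : List ℕ) : ∑ i ∈ Finset.Icc 1 L.length, entry L i = L.sum := by
  rw [Icc_one_sum, ← sum_getD]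
  refine Finset.sum_congr rfl fun i _ => ?_
  simp [entry, Nat.add_sub_cancel_left]

lemma neg_one_pow_Icc_sum (s t : ℕ) (hs : 1 ≤ s) :
    ∑ j ∈ Finset.Icc s (s + t - 1), (-1 : ℤ) ^ j = (-1) ^ s * (if Even t then 0 else 1) := by
  rcases Nat.eq_zero_or_pos t with ht | ht
  · subst ht; rw [Finset.Icc_eq_empty (by omega)]; simp
  · rw [← Finset.Ico_add_one_right_eq_Icc, Finset.sum_Ico_eq_sum_range,
        show s + t - 1 + 1 - s = t by omega]
    have : ∀ i, (-1 : ℤ) ^ (s + i) = (-1) ^ s * (-1) ^ i := fun i => pow_add _ _ _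
    rw [Finset.sum_congr rfl fun i _ => this i, ← Finset.mul_sum, neg_one_geom_sum]

section SP
variable {L : List ℕ} (hL : IsStrictPartition L)
include hL

lemma sp_pos : ∀ i, 1 ≤ i → i ≤ L.length → 1 ≤ entry L i := by
  intro i h1 h2
  rw [entry_eq_getElem L i h1 h2]
  exact hL.2 _ (List.getElem_mem _)

lemma sp_strict : ∀ i j, 1 ≤ i → i < j → j ≤ L.length → entry L j < entry L i := by
  intro i j h1 h2 h3
  rw [entry_eq_getElem L i h1 (by omega), entry_eq_getElem L j (by omega) h3]
  have := List.pairwise_iff_get.mp hL.1 ⟨i-1, by omega⟩ ⟨j-1, by omega⟩ (by simp; omega)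
  simpa [List.get_eq_getElem] using this

lemma sp_gap : ∀ t i, 1 ≤ i → i + t ≤ L.length → entry L (i + t) + t ≤ entry L i := by
  intro t
  induction t with
  | zero => intro i _ _; simp
  | succ s ih =>
    intro i h1 h2
    have h3 := ih (i + 1) (by omega) (by omega)
    have h4 := sp_strict hL i (i+1) h1 (by omega) (by omega)
    rw [show i + (s + 1) = i + 1 + s by omega]
    omega

lemma sp_profile_anti : ∀ i j, 1 ≤ i → i ≤ j → j ≤ L.length → entry L j + j ≤ entry L i + i := by
  intro i j h1 h2 h3
  have hg := sp_gap hL (j - i) i h1 (by omega)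
  rw [show i + (j - i) = j by omega] at hg
  omega

lemma sp_low : ∀ i, 1 ≤ i → i ≤ L.length → L.length + 1 ≤ entry L i + i := by
  intro i h1 h2
  have h3 := sp_profile_anti hL i L.length h1 h2 le_rfl
  have h4 := sp_pos hL L.length (by omega) le_rfl
  omega

lemma colSeq_ge_iff {i j : ℕ} (hi1 : 1 ≤ i) (him : i ≤ L.length) (hj : 1 ≤ j) :
    i ≤ colSeq L j ↔ i ≤ j ∧ j + 1 ≤ entry L i + i := by
  constructor
  · intro h
    by_contra hc
    push_neg at hc
    rcases Nat.lt_or_ge j i with hA | hA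
    · have hsub : (Finset.Icc 1 L.length).filter (fun x => x ≤ j ∧ j ≤ entry L x + x - 1)
          ⊆ Finset.Icc 1 j := by
        intro x hx
        simp only [Finset.mem_filter, Finset.mem_Icc] at hx ⊢
        omega
      have hcard := Finset.card_le_card hsub
      rw [Nat.card_Icc] at hcard
      unfold colSeq at h; omega
    · have hB : entry L i + i ≤ j := by omega
      have hsub : (Finset.Icc 1 L.length).filter (fun x => x ≤ j ∧ j ≤ entry L x + x - 1)
          ⊆ Finset.Icc 1 (i - 1) := by
        intro x hx
        simp only [Finset.mem_filter, Finset.mem_Icc] at hx ⊢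
        rcases Nat.lt_or_ge x i with h' | h'
        · omega
        · have hpa := sp_profile_anti hL i x hi1 h' hx.1.2
          have hpx := sp_pos hL x (by omega) hx.1.2
          omega
      have hcard := Finset.card_le_card hsub
      rw [Nat.card_Icc] at hcard
      unfold colSeq at h; omega
  · rintro ⟨h1, h2⟩
    have hsub : Finset.Icc 1 i ⊆
        (Finset.Icc 1 L.length).filter (fun x => x ≤ j ∧ j ≤ entry L x + x - 1) := by
      intro x hx
      simp only [Finset.mem_Icc] at hx
      simp only [Finset.mem_filter, Finset.mem_Icc]
      have hpa := sp_profile_anti hL x i hx.1 hx.2 him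
      have hpx := sp_pos hL x hx.1 (by omega)
      omega
    have := Finset.card_le_card hsub
    simpa [colSeq] using this

lemma colSeq_le_len (j : ℕ) : colSeq L j ≤ L.length :=
  (Finset.card_filter_le _ _).trans_eq (by simp)

lemma colSeq_eq_self {j : ℕ} (h1 : 1 ≤ j) (h2 : j ≤ L.length) : colSeq L j = j := by
  have hge : j ≤ colSeq L j := by
    rw [colSeq_ge_iff hL h1 h2 h1]
    have := sp_pos hL j h1 h2
    omega
  have hle : colSeq L j ≤ j := by
    by_contra hc
    push_neg at hc
    rcases Nat.lt_or_ge j L.length with h' | h'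
    · have := (colSeq_ge_iff hL (i := j+1) (by omega) (by omega) h1).mp (by omega)
      omega
    · have := colSeq_le_len hL (L := L) j
      omega
  omega

lemma colSeq_pos {j : ℕ} (hm : 1 ≤ L.length) (h1 : 1 ≤ j) (h2 : j ≤ entry L 1) :
    1 ≤ colSeq L j := by
  rw [colSeq_ge_iff hL le_rfl hm h1]
  omega

lemma colSeq_zero {j : ℕ} (h2 : entry L 1 < j) : colSeq L j = 0 := by
  rcases Nat.eq_zero_or_pos L.length with hm | hm
  · unfold colSeq; rw [hm, Finset.Icc_eq_empty (by omega)]; simp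
  by_contra hc
  have h1 : 1 ≤ j := by
    have := sp_pos hL 1 le_rfl hm
    omega
  have := (colSeq_ge_iff hL le_rfl hm h1).mp (by omega)
  omega

lemma colSeq_anti {j j' : ℕ} (h1 : L.length ≤ j) (h2 : j ≤ j') : colSeq L j' ≤ colSeq L j := by
  rcases Nat.eq_zero_or_pos (colSeq L j') with h | h
  · omega
  have hm : 1 ≤ L.length := by
    by_contra hm
    have h0 : L.length = 0 := by omega
    unfold colSeq at h
    rw [h0, Finset.Icc_eq_empty (by omega)] at h
    simp at h
  have hj'1 : 1 ≤ j' := by omega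
  set i := colSeq L j' with hi
  have hil : i ≤ L.length := colSeq_le_len hL j'
  have := (colSeq_ge_iff hL h hil hj'1).mp le_rfl
  exact (colSeq_ge_iff hL h hil (by omega)).mpr ⟨by omega, by omega⟩

lemma rowset {i : ℕ} (h1 : 1 ≤ i) (h2 : i ≤ L.length) :
    (Finset.Icc 1 (entry L 1)).filter (fun j => i ≤ colSeq L j)
      = Finset.Icc i (entry L i + i - 1) := by
  ext j
  simp only [Finset.mem_filter, Finset.mem_Icc]
  constructor
  · rintro ⟨⟨hj1, hje⟩, hcol⟩
    have := (colSeq_ge_iff hL h1 h2 hj1).mp hcol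
    have := sp_pos hL i h1 h2
    omega
  · rintro ⟨hij, hj2⟩
    have hpa := sp_profile_anti hL 1 i (le_refl 1) h1 h2
    have hpi := sp_pos hL i h1 h2
    have hj1 : 1 ≤ j := by omega
    refine ⟨⟨hj1, by omega⟩, (colSeq_ge_iff hL h1 h2 hj1).mpr ⟨hij, by omega⟩⟩

lemma rowcount {i : ℕ} (h1 : 1 ≤ i) (h2 : i ≤ L.length) :
    ((Finset.Icc 1 (entry L 1)).filter (fun j => i ≤ colSeq L j)).card = entry L i := by
  rw [rowset hL h1 h2, Nat.card_Icc]
  have := sp_pos hL i h1 h2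
  omega

end SP


section SP2
variable {L : List ℕ} (hL : IsStrictPartition L)
include hL

lemma colfilter_eq (j : ℕ) :
    (Finset.Icc 1 L.length).filter (fun i => i ≤ colSeq L j) = Finset.Icc 1 (colSeq L j) := by
  have hle := colSeq_le_len hL (L := L) j
  ext x
  simp only [Finset.mem_filter, Finset.mem_Icc]
  omega

lemma colSum : ∑ j ∈ Finset.Icc 1 (entry L 1), colSeq L j = L.sum := by
  have hstep : ∀ j, colSeq L j
      = ∑ i ∈ Finset.Icc 1 L.length, if i ≤ colSeq L j then 1 else 0 := by
    intro j
    rw [← Finset.card_filter, colfilter_eq hL, Nat.card_Icc]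
    omega
  rw [Finset.sum_congr rfl fun j _ => hstep j, Finset.sum_comm, ← entry_sum L]
  refine Finset.sum_congr rfl fun i hi => ?_
  simp only [Finset.mem_Icc] at hi
  rw [← Finset.card_filter, rowcount hL hi.1 hi.2]

lemma colAlt : ∑ j ∈ Finset.Icc 1 (entry L 1), (-1:ℤ)^j * (colSeq L j : ℤ) = - bgRank L := by
  have hstep : ∀ j, (-1:ℤ)^j * (colSeq L j : ℤ)
      = ∑ i ∈ Finset.Icc 1 L.length, if i ≤ colSeq L j then (-1:ℤ)^j else 0 := by
    intro j
    rw [← Finset.sum_filter, colfilter_eq hL, Finset.sum_const, Nat.card_Icc,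
        Nat.add_sub_cancel, nsmul_eq_mul, mul_comm]
  rw [Finset.sum_congr rfl fun j _ => hstep j, Finset.sum_comm]
  have hinner : ∀ i ∈ Finset.Icc 1 L.length,
      (∑ j ∈ Finset.Icc 1 (entry L 1), if i ≤ colSeq L j then (-1:ℤ)^j else 0)
      = (-1)^i * (if Even (entry L i) then 0 else 1) := by
    intro i hi
    simp only [Finset.mem_Icc] at hi
    rw [← Finset.sum_filter, rowset hL hi.1 hi.2,
        show entry L i + i - 1 = i + entry L i - 1 by omega,
        neg_one_pow_Icc_sum i (entry L i) hi.1]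
  rw [Finset.sum_congr rfl hinner]
  unfold bgRank
  rw [Finset.card_filter, Finset.card_filter]
  push_cast
  rw [neg_sub, ← Finset.sum_sub_distrib]
  refine Finset.sum_congr rfl fun i _ => ?_
  rcases Nat.even_or_odd i with hi2 | hi2 <;> rcases Nat.even_or_odd (entry L i) with hp2 | hp2 <;>
    simp [hi2, hp2, hi2.neg_one_pow, ← Nat.not_odd_iff_even, ← Nat.not_even_iff_odd]

end SP2


lemma entry_eq_zero (L : List ℕ) (i : ℕ) (h : L.length < i) : entry L i = 0 := by
  simp [entry, List.getD_eq_getElem?_getD, List.getElem?_eq_none (by omega : L.length ≤ i - 1)]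

lemma entry_map_range (f : ℕ → ℕ) (t i : ℕ) (h1 : 1 ≤ i) (h2 : i ≤ t) :
    entry ((List.range t).map f) i = f (i - 1) := by
  rw [entry_eq_getElem _ _ h1 (by simpa using h2)]
  simp [List.getElem_map, List.getElem_range]

lemma sum_Ioc_shift {M : Type*} [AddCommMonoid M] (a t : ℕ) (f : ℕ → M) :
    ∑ j ∈ Finset.Ioc a (a + t), f j = ∑ i ∈ Finset.Icc 1 t, f (a + i) := by
  rw [Icc_one_sum, show Finset.Ioc a (a+t) = Finset.Ico (a+1) (a+t+1) by
        rw [← Finset.Icc_add_one_left_eq_Ioc, Finset.Ico_add_one_right_eq_Icc], Finset.sum_Ico_eq_sum_range]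
  have : a + t + 1 - (a + 1) = t := by omega
  rw [this]
  exact Finset.sum_congr rfl fun i _ => by ring_nf

lemma Icc_split {M : Type*} [AddCommMonoid M] (a n : ℕ) (h : a ≤ n) (f : ℕ → M) :
    ∑ j ∈ Finset.Icc 1 n, f j = (∑ j ∈ Finset.Icc 1 a, f j) + ∑ j ∈ Finset.Ioc a n, f j := by
  rw [show Finset.Icc 1 n = Finset.Ioc 0 n by rw [← Finset.Icc_add_one_left_eq_Ioc, zero_add],
      show Finset.Icc 1 a = Finset.Ioc 0 a by rw [← Finset.Icc_add_one_left_eq_Ioc, zero_add],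
      ← Finset.sum_Ioc_consecutive _ (Nat.zero_le a) h]

lemma alt_id_sum (s : ℕ) : ∑ j ∈ Finset.Icc 1 (2 * s), (-1 : ℤ) ^ j * (j : ℤ) = s := by
  induction s with
  | zero => simp
  | succ t ih =>
    have h1 : 2 * (t + 1) = (2 * t + 1) + 1 := by ring
    rw [h1, ← Finset.Ico_add_one_right_eq_Icc, Finset.sum_Ico_succ_top (by omega),
        Finset.sum_Ico_succ_top (by omega), Finset.Ico_add_one_right_eq_Icc, ih]
    have e1 : (-1:ℤ)^(2*t+1) = -1 := Odd.neg_one_pow ⟨t, by ring⟩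
    have e2 : (-1:ℤ)^(2*t+1+1) = 1 := by rw [pow_succ, e1]; norm_num
    rw [e1, e2]; push_cast; ring

lemma id_Icc_sum (s : ℕ) : ∑ j ∈ Finset.Icc 1 (2 * s), (j : ℤ) = s * (2 * s + 1) := by
  induction s with
  | zero => simp
  | succ t ih =>
    have h1 : 2 * (t + 1) = (2 * t + 1) + 1 := by ring
    rw [h1, ← Finset.Ico_add_one_right_eq_Icc, Finset.sum_Ico_succ_top (by omega),
        Finset.sum_Ico_succ_top (by omega), Finset.Ico_add_one_right_eq_Icc, ih]
    push_cast; ring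

def fwd (a : ℕ) (L : List ℕ) : List ℕ :=
  (List.range (entry L 1 - a)).map (fun t => colSeq L (a + t + 1))

lemma fwd_length (a : ℕ) (L : List ℕ) : (fwd a L).length = entry L 1 - a := by
  simp [fwd]

lemma fwd_entry (a : ℕ) (L : List ℕ) {i : ℕ} (h1 : 1 ≤ i) (h2 : i ≤ entry L 1 - a) :
    entry (fwd a L) i = colSeq L (a + i) := by
  rw [fwd, entry_map_range _ _ _ h1 h2, show a + (i - 1) + 1 = a + i by omega]

lemma fwd_mem {L : List ℕ} (hL : IsStrictPartition L) (s b : ℕ) (hb : 1 ≤ b)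
    (hmlen : L.length = 2*s + b) (hbg : bgRank L = -(s:ℤ)) :
    IsABSeq (2*s) b (fwd (2*s) L) ∧ ((fwd (2*s) L).sum : ℤ) = (L.sum : ℤ) - s*(2*s+1) := by
  set a := 2*s with ha
  set m := L.length with hm
  have hm1 : 1 ≤ m := by omega
  have he1 : m + 1 ≤ entry L 1 + 1 := sp_low hL 1 le_rfl hm1
  set e1 := entry L 1 with he
  have hlen : (fwd a L).length = e1 - a := fwd_length a L
  have hsum : ∑ j ∈ Finset.Icc 1 e1, colSeq L j = L.sum := colSum hL
  have hsplit := Icc_split a e1 (by omega) (fun j => (colSeq L j : ℤ))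
  have hshift := sum_Ioc_shift a (e1 - a) (fun j => (colSeq L j : ℤ))
  rw [show a + (e1 - a) = e1 by omega] at hshift
  have hlow : ∀ j, 1 ≤ j → j ≤ a → colSeq L j = j := by
    intro j hj1 hj2
    exact colSeq_eq_self hL hj1 (by omega)
  have hlowsum : ∑ j ∈ Finset.Icc 1 a, (colSeq L j : ℤ) = ∑ j ∈ Finset.Icc 1 a, (j : ℤ) := by
    refine Finset.sum_congr rfl fun j hj => ?_
    simp only [Finset.mem_Icc] at hj
    rw [hlow j hj.1 hj.2]
  have hentriesZ : ∀ i ∈ Finset.Icc 1 (e1 - a), (entry (fwd a L) i : ℤ) = (colSeq L (a+i) : ℤ) := by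
    intro i hi
    simp only [Finset.mem_Icc] at hi
    rw [fwd_entry a L hi.1 hi.2]
  have hsumfZ : ((fwd a L).sum : ℤ) = ∑ j ∈ Finset.Ioc a e1, (colSeq L j : ℤ) := by
    rw [← entry_sum (fwd a L), hlen]
    push_cast
    rw [Finset.sum_congr rfl hentriesZ, hshift]
  constructor
  · refine ⟨hb, by omega, ?_, ?_, ?_, ?_⟩
    · intro i hi1 hi2
      rw [hlen] at hi2
      rw [fwd_entry a L hi1 hi2]
      exact colSeq_pos hL hm1 (by omega) (by omega)
    · intro i hi1 hi2
      rw [fwd_entry a L hi1 (by omega)]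
      exact colSeq_eq_self hL (by omega) (by omega)
    · intro i j hbi hij hjl
      rw [hlen] at hjl
      rw [fwd_entry a L (i := j) (by omega) hjl, fwd_entry a L (i := i) (by omega) (by omega)]
      exact colSeq_anti hL (by omega) (by omega)
    · rw [altSum, hlen]
      have hterm : ∀ i ∈ Finset.Icc 1 (e1 - a), (-1:ℤ)^i * (entry (fwd a L) i : ℤ)
          = (-1:ℤ)^(a+i) * (colSeq L (a+i) : ℤ) := by
        intro i hi
        simp only [Finset.mem_Icc] at hi
        rw [fwd_entry a L hi.1 hi.2, pow_add, ha, pow_mul]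
        norm_num
      rw [Finset.sum_congr rfl hterm]
      have hshift2 := sum_Ioc_shift a (e1 - a) (fun j => (-1:ℤ)^j * (colSeq L j : ℤ))
      rw [show a + (e1 - a) = e1 by omega] at hshift2
      rw [← hshift2]
      have hsplit2 := Icc_split a e1 (by omega) (fun j => (-1:ℤ)^j * (colSeq L j : ℤ))
      have halt := colAlt hL
      rw [← he] at halt
      have hlowalt : ∑ j ∈ Finset.Icc 1 a, (-1:ℤ)^j * (colSeq L j : ℤ)
          = ∑ j ∈ Finset.Icc 1 a, (-1:ℤ)^j * (j : ℤ) := by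
        refine Finset.sum_congr rfl fun j hj => ?_
        simp only [Finset.mem_Icc] at hj
        rw [hlow j hj.1 hj.2]
      rw [hlowalt, ha, alt_id_sum] at hsplit2
      rw [halt, hbg] at hsplit2
      linarith [hsplit2]
  · rw [hsumfZ]
    have : ∑ j ∈ Finset.Icc 1 e1, (colSeq L j : ℤ) = (L.sum : ℤ) := by
      rw [← hsum]; push_cast; ring
    rw [this, hlowsum, ha, id_Icc_sum] at hsplit
    linarith [hsplit]

def cmap (a : ℕ) (d : List ℕ) (j : ℕ) : ℕ := if j ≤ a then j else entry d (j - a)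

def bwd (a m : ℕ) (d : List ℕ) : List ℕ :=
  (List.range m).map (fun t =>
    ((Finset.Icc 1 (a + d.length)).filter (fun j => t + 1 ≤ cmap a d j)).card)

lemma bwd_length (a m : ℕ) (d : List ℕ) : (bwd a m d).length = m := by simp [bwd]

lemma bwd_entry (a m : ℕ) (d : List ℕ) {i : ℕ} (h1 : 1 ≤ i) (h2 : i ≤ m) :
    entry (bwd a m d) i
      = ((Finset.Icc 1 (a + d.length)).filter (fun j => i ≤ cmap a d j)).card := by
  rw [bwd, entry_map_range _ _ _ h1 h2]
  have : i - 1 + 1 = i := by omega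
  simp only [this]

section BWD

variable {s b : ℕ} {d : List ℕ}

lemma cmap_eq_self (hAB : IsABSeq (2*s) b d) {j : ℕ} (h1 : 1 ≤ j) (h2 : j ≤ 2*s + b) :
    cmap (2*s) d j = j := by
  obtain ⟨hb1, hbl, hpos, hinit, hanti, halt⟩ := hAB
  unfold cmap
  split_ifs with h
  · rfl
  · rw [hinit (j - 2*s) (by omega) (by omega)]
    omega

lemma cmap_le (hAB : IsABSeq (2*s) b d) {j : ℕ} (h1 : 1 ≤ j) :
    cmap (2*s) d j ≤ 2*s + b := by
  obtain ⟨hb1, hbl, hpos, hinit, hanti, halt⟩ := hAB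
  unfold cmap
  split_ifs with h
  · omega
  · rcases le_or_gt (j - 2*s) b with h' | h'
    · rw [hinit (j - 2*s) (by omega) h']
      omega
    · rcases le_or_gt (j - 2*s) d.length with h'' | h''
      · have := hanti b (j - 2*s) le_rfl (by omega) h''
        rw [hinit b hb1 le_rfl] at this
        omega
      · rw [entry_eq_zero d _ h'']
        omega

lemma cmap_anti (hAB : IsABSeq (2*s) b d) {j j' : ℕ} (h1 : 2*s + b ≤ j) (h2 : j ≤ j') :
    cmap (2*s) d j' ≤ cmap (2*s) d j := by
  obtain ⟨hb1, hbl, hpos, hinit, hanti, halt⟩ := hAB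
  unfold cmap
  rw [if_neg (by omega), if_neg (by omega)]
  rcases le_or_gt (j' - 2*s) d.length with h'' | h''
  · exact hanti (j - 2*s) (j' - 2*s) (by omega) (by omega) h''
  · rw [entry_eq_zero d _ h'']
    omega

lemma cmap_pos (hAB : IsABSeq (2*s) b d) {j : ℕ} (h1 : 1 ≤ j) (h2 : j ≤ 2*s + d.length) :
    1 ≤ cmap (2*s) d j := by
  obtain ⟨hb1, hbl, hpos, hinit, hanti, halt⟩ := hAB
  unfold cmap
  split_ifs with h
  · omega
  · exact hpos (j - 2*s) (by omega) (by omega)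

lemma cmap_interval (hAB : IsABSeq (2*s) b d) {i : ℕ} (h1 : 1 ≤ i) (h2 : i ≤ 2*s + b) :
    ∃ M, i ≤ M ∧ M ≤ 2*s + d.length ∧ 2*s + b ≤ M ∧
      (Finset.Icc 1 (2*s + d.length)).filter (fun j => i ≤ cmap (2*s) d j)
        = Finset.Icc i M := by
  have hbl := hAB.2.1
  set a := 2*s with ha
  set m := a + b with hm
  set len := a + d.length with hlen
  set S := (Finset.Icc 1 len).filter (fun j => i ≤ cmap a d j) with hS
  have hmlen : m ≤ len := by omega
  have hmem : ∀ j, j ∈ S ↔ (1 ≤ j ∧ j ≤ len ∧ i ≤ cmap a d j) := by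
    intro j
    simp only [hS, Finset.mem_filter, Finset.mem_Icc]
    tauto
  have hiS : i ∈ S := by
    rw [hmem]
    exact ⟨h1, by omega, by rw [cmap_eq_self hAB h1 h2]⟩
  have hmS : m ∈ S := by
    rw [hmem]
    refine ⟨by omega, by omega, ?_⟩
    rw [cmap_eq_self hAB (by omega) le_rfl]
    omega
  have hne : S.Nonempty := ⟨i, hiS⟩
  refine ⟨S.max' hne, Finset.le_max' S i hiS, ?_, Finset.le_max' S m hmS, ?_⟩
  · have := S.max'_mem hne
    rw [hmem] at this
    omega
  · have hMmem := S.max'_mem hne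
    rw [hmem] at hMmem
    ext j
    rw [hmem, Finset.mem_Icc]
    constructor
    · rintro ⟨hj1, hj2, hj3⟩
      refine ⟨?_, Finset.le_max' S j (by rw [hmem]; exact ⟨hj1, hj2, hj3⟩)⟩
      rcases le_or_gt j m with h' | h'
      · rw [cmap_eq_self hAB hj1 h'] at hj3
        exact hj3
      · omega
    · rintro ⟨hj1, hj2⟩
      refine ⟨by omega, by omega, ?_⟩
      rcases le_or_gt j m with h' | h'
      · rw [cmap_eq_self hAB (by omega) h']
        exact hj1
      · have hca := cmap_anti hAB (j := j) (j' := S.max' hne) (by omega) hj2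
        rw [← ha] at hca
        omega
end BWD

section BWD2
variable {s b : ℕ} {d : List ℕ}

lemma bwd_filter (hAB : IsABSeq (2*s) b d) {i : ℕ} (h1 : 1 ≤ i) (h2 : i ≤ 2*s + b) :
    (Finset.Icc 1 (2*s + d.length)).filter (fun j => i ≤ cmap (2*s) d j)
      = Finset.Icc i (entry (bwd (2*s) (2*s+b) d) i + i - 1)
    ∧ 2*s + b + 1 ≤ entry (bwd (2*s) (2*s+b) d) i + i := by
  obtain ⟨M, hM1, hM2, hM3, hM4⟩ := cmap_interval hAB h1 h2
  rw [bwd_entry _ _ _ h1 h2, hM4, Nat.card_Icc]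
  constructor
  · congr 1
    omega
  · omega

lemma bwd_pos (hAB : IsABSeq (2*s) b d) {i : ℕ} (h1 : 1 ≤ i) (h2 : i ≤ 2*s + b) :
    1 ≤ entry (bwd (2*s) (2*s+b) d) i := by
  have := (bwd_filter hAB h1 h2).2
  omega

lemma bwd_strict_adj (hAB : IsABSeq (2*s) b d) {i : ℕ} (h1 : 1 ≤ i) (h2 : i + 1 ≤ 2*s + b) :
    entry (bwd (2*s) (2*s+b) d) (i+1) < entry (bwd (2*s) (2*s+b) d) i := by
  rw [bwd_entry _ _ _ (by omega) h2, bwd_entry _ _ _ h1 (by omega)]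
  have hbl := hAB.2.1
  have hmem : i ∈ (Finset.Icc 1 (2*s+d.length)).filter (fun j => i ≤ cmap (2*s) d j) := by
    simp only [Finset.mem_filter, Finset.mem_Icc]
    exact ⟨⟨h1, by omega⟩, by rw [cmap_eq_self hAB h1 (by omega)]⟩
  have hsub : (Finset.Icc 1 (2*s+d.length)).filter (fun j => i+1 ≤ cmap (2*s) d j)
      ⊆ ((Finset.Icc 1 (2*s+d.length)).filter (fun j => i ≤ cmap (2*s) d j)).erase i := by
    intro x hx
    simp only [Finset.mem_filter, Finset.mem_Icc, Finset.mem_erase] at hx ⊢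
    have hxi : x ≠ i := by
      intro h
      subst h
      rw [cmap_eq_self hAB h1 (by omega)] at hx
      omega
    exact ⟨hxi, hx.1, by omega⟩
  have hcard := Finset.card_le_card hsub
  rw [Finset.card_erase_of_mem hmem] at hcard
  have hpos := Finset.card_pos.mpr ⟨i, hmem⟩
  omega

lemma bwd_strict (hAB : IsABSeq (2*s) b d) :
    ∀ t i, 1 ≤ i → i + t + 1 ≤ 2*s + b →
      entry (bwd (2*s) (2*s+b) d) (i+t+1) < entry (bwd (2*s) (2*s+b) d) i := by
  intro t
  induction t with
  | zero => intro i h1 h2; simpa using bwd_strict_adj hAB h1 (by omega)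
  | succ u ih =>
    intro i h1 h2
    have hstep := bwd_strict_adj hAB h1 (by omega)
    have := ih (i+1) (by omega) (by omega)
    rw [show i + 1 + u + 1 = i + (u+1) + 1 by omega] at this
    omega

lemma bwd_sp (hAB : IsABSeq (2*s) b d) : IsStrictPartition (bwd (2*s) (2*s+b) d) := by
  constructor
  · apply List.pairwise_iff_get.mpr
    intro p q hpq
    have hlen : (bwd (2*s) (2*s+b) d).length = 2*s+b := bwd_length _ _ _
    have hp : (p : ℕ) < 2*s+b := lt_of_lt_of_eq p.2 hlen
    have hq : (q : ℕ) < 2*s+b := lt_of_lt_of_eq q.2 hlen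
    have h := bwd_strict hAB ((q:ℕ) - (p:ℕ) - 1) ((p:ℕ)+1) (by omega) (by omega)
    rw [show (p:ℕ) + 1 + ((q:ℕ) - (p:ℕ) - 1) + 1 = (q:ℕ) + 1 by omega] at h
    rw [entry_eq_getElem _ _ (by omega) (by omega), entry_eq_getElem _ _ (by omega) (by omega)] at h
    simp only [List.get_eq_getElem]
    simpa using h
  · intro x hx
    obtain ⟨t, ht, rfl⟩ := List.mem_iff_getElem.mp hx
    have hlen : (bwd (2*s) (2*s+b) d).length = 2*s+b := bwd_length _ _ _
    have := bwd_pos hAB (i := t+1) (by omega) (by omega)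
    rw [entry_eq_getElem _ _ (by omega) (by omega)] at this
    exact Nat.lt_of_lt_of_le Nat.zero_lt_one (by simpa using this)

lemma bwd_sum (hAB : IsABSeq (2*s) b d) :
    ((bwd (2*s) (2*s+b) d).sum : ℤ) = s*(2*s+1) + (d.sum : ℤ) := by
  have hbl := hAB.2.1
  set a := 2*s with ha
  set m := a + b with hm
  set len := a + d.length with hlend
  set B := bwd a m d with hB
  have hlen : B.length = m := bwd_length _ _ _
  have h1 : B.sum = ∑ i ∈ Finset.Icc 1 m, entry B i := by
    rw [← entry_sum B, hlen]
  have h2 : ∀ i ∈ Finset.Icc 1 m, entry B i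
      = ∑ j ∈ Finset.Icc 1 len, if i ≤ cmap a d j then 1 else 0 := by
    intro i hi
    simp only [Finset.mem_Icc] at hi
    rw [bwd_entry _ _ _ hi.1 hi.2, Finset.card_filter]
  have h3 : ∀ j ∈ Finset.Icc 1 len,
      (∑ i ∈ Finset.Icc 1 m, if i ≤ cmap a d j then 1 else 0) = cmap a d j := by
    intro j hj
    simp only [Finset.mem_Icc] at hj
    rw [← Finset.card_filter]
    have : (Finset.Icc 1 m).filter (fun i => i ≤ cmap a d j) = Finset.Icc 1 (cmap a d j) := by
      have hle := cmap_le hAB hj.1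
      rw [← ha] at hle
      ext x
      simp only [Finset.mem_filter, Finset.mem_Icc]
      omega
    rw [this, Nat.card_Icc]
    omega
  rw [h1, Finset.sum_congr rfl h2, Finset.sum_comm, Finset.sum_congr rfl h3,
      Icc_split a len (by omega) (fun j => cmap a d j)]
  have h4 : ∑ j ∈ Finset.Icc 1 a, cmap a d j = ∑ j ∈ Finset.Icc 1 a, j := by
    refine Finset.sum_congr rfl fun j hj => ?_
    simp only [Finset.mem_Icc] at hj
    unfold cmap
    rw [if_pos hj.2]
  have h5 : ∑ j ∈ Finset.Ioc a len, cmap a d j = d.sum := by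
    rw [hlend, sum_Ioc_shift a d.length (fun j => cmap a d j), ← entry_sum d]
    refine Finset.sum_congr rfl fun i hi => ?_
    simp only [Finset.mem_Icc] at hi
    unfold cmap
    rw [if_neg (by omega), show a + i - a = i by omega]
  have h6 : ∑ j ∈ Finset.Icc 1 a, (j:ℤ) = (s : ℤ) * (2*s+1) := by
    rw [ha, id_Icc_sum]
  rw [h4, h5]
  push_cast [← h6]
  ring

lemma bwd_colSeq (hAB : IsABSeq (2*s) b d) {j : ℕ} (h1 : 1 ≤ j) (h2 : j ≤ 2*s + d.length) :
    colSeq (bwd (2*s) (2*s+b) d) j = cmap (2*s) d j := by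
  have hbl := hAB.2.1
  set a := 2*s with ha
  set m := a + b with hm
  set len := a + d.length with hlend
  set B := bwd a m d with hB
  have hlen : B.length = m := bwd_length _ _ _
  unfold colSeq
  rw [hlen]
  have hfe : (Finset.Icc 1 m).filter (fun i => i ≤ j ∧ j ≤ entry B i + i - 1)
      = Finset.Icc 1 (cmap a d j) := by
    ext i
    simp only [Finset.mem_filter, Finset.mem_Icc]
    constructor
    · rintro ⟨⟨hi1, him⟩, hij, hjb⟩
      have hf := (bwd_filter hAB hi1 him).1
      have hj' : j ∈ Finset.Icc i (entry B i + i - 1) := by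
        rw [Finset.mem_Icc]
        exact ⟨hij, hjb⟩
      rw [← hf] at hj'
      simp only [Finset.mem_filter, Finset.mem_Icc] at hj'
      exact ⟨hi1, hj'.2⟩
    · rintro ⟨hi1, hic⟩
      have hcle := cmap_le hAB h1
      rw [← ha] at hcle
      have him : i ≤ m := by omega
      have hf := (bwd_filter hAB hi1 him).1
      have hj' : j ∈ (Finset.Icc 1 len).filter (fun j => i ≤ cmap a d j) := by
        simp only [Finset.mem_filter, Finset.mem_Icc]
        exact ⟨⟨h1, h2⟩, hic⟩
      rw [hf] at hj'
      simp only [Finset.mem_Icc] at hj'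
      exact ⟨⟨hi1, him⟩, hj'.1, hj'.2⟩
  rw [hfe, Nat.card_Icc]
  omega

lemma bwd_entry_one (hAB : IsABSeq (2*s) b d) :
    entry (bwd (2*s) (2*s+b) d) 1 = 2*s + d.length := by
  have hb1 := hAB.1
  rw [bwd_entry _ _ _ le_rfl (by omega)]
  rw [Finset.filter_true_of_mem, Nat.card_Icc]
  · omega
  · intro j hj
    simp only [Finset.mem_Icc] at hj
    exact cmap_pos hAB hj.1 hj.2

lemma bwd_bg (hAB : IsABSeq (2*s) b d) : bgRank (bwd (2*s) (2*s+b) d) = -(s:ℤ) := by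
  have hbl := hAB.2.1
  have halt0 := hAB.2.2.2.2.2
  have hsp := bwd_sp hAB
  have halt := colAlt hsp
  rw [bwd_entry_one hAB] at halt
  set a := 2*s with ha
  set len := a + d.length with hlend
  have hcs : ∀ j ∈ Finset.Icc 1 len, (-1:ℤ)^j * (colSeq (bwd a (a+b) d) j : ℤ)
      = (-1:ℤ)^j * (cmap a d j : ℤ) := by
    intro j hj
    simp only [Finset.mem_Icc] at hj
    rw [bwd_colSeq hAB hj.1 hj.2]
  rw [Finset.sum_congr rfl hcs, Icc_split a len (by omega) (fun j => (-1:ℤ)^j * (cmap a d j : ℤ))] at halt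
  have h4 : ∑ j ∈ Finset.Icc 1 a, (-1:ℤ)^j * (cmap a d j : ℤ)
      = ∑ j ∈ Finset.Icc 1 a, (-1:ℤ)^j * (j : ℤ) := by
    refine Finset.sum_congr rfl fun j hj => ?_
    simp only [Finset.mem_Icc] at hj
    unfold cmap
    rw [if_pos hj.2]
  have h5 : ∑ j ∈ Finset.Ioc a len, (-1:ℤ)^j * (cmap a d j : ℤ) = altSum d d.length := by
    rw [hlend, sum_Ioc_shift a d.length (fun j => (-1:ℤ)^j * (cmap a d j : ℤ)), altSum]
    refine Finset.sum_congr rfl fun i hi => ?_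
    simp only [Finset.mem_Icc] at hi
    unfold cmap
    rw [if_neg (by omega), show a + i - a = i by omega, pow_add, ha, pow_mul]
    norm_num
  rw [h4, h5, halt0, ha, alt_id_sum] at halt
  linarith [halt]

lemma list_ext_entry {L1 L2 : List ℕ} (h : L1.length = L2.length)
    (he : ∀ i, 1 ≤ i → i ≤ L1.length → entry L1 i = entry L2 i) : L1 = L2 := by
  apply List.ext_getElem h
  intro t h1 h2
  have := he (t+1) (by omega) (by omega)
  rw [entry_eq_getElem L1 _ (by omega) (by omega),
      entry_eq_getElem L2 _ (by omega) (by omega)] at this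
  simpa using this

lemma fwd_bwd (hAB : IsABSeq (2*s) b d) : fwd (2*s) (bwd (2*s) (2*s+b) d) = d := by
  have hbl := hAB.2.1
  apply list_ext_entry
  · rw [fwd_length, bwd_entry_one hAB]
    omega
  · intro i hi1 hi2
    rw [fwd_length, bwd_entry_one hAB] at hi2
    rw [fwd_entry _ _ hi1 (by rw [bwd_entry_one hAB]; omega)]
    rw [bwd_colSeq hAB (by omega) (by omega)]
    unfold cmap
    rw [if_neg (by omega), show 2*s + i - (2*s) = i by omega]

end BWD2

lemma bwd_fwd {s b : ℕ} {L : List ℕ} (hL : IsStrictPartition L) (hb : 1 ≤ b)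
    (hmlen : L.length = 2*s + b) (hbg : bgRank L = -(s:ℤ)) :
    bwd (2*s) (2*s+b) (fwd (2*s) L) = L := by
  have hAB := (fwd_mem hL s b hb hmlen hbg).1
  set a := 2*s with ha
  set m := a + b with hm
  have hm1 : 1 ≤ m := by omega
  have he1 : m + 1 ≤ entry L 1 + 1 := by
    rw [← hmlen] at hm1 ⊢
    exact sp_low hL 1 le_rfl hm1
  have hflen : (fwd a L).length = entry L 1 - a := fwd_length a L
  have hcc : ∀ j, 1 ≤ j → j ≤ entry L 1 → cmap a (fwd a L) j = colSeq L j := by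
    intro j hj1 hj2
    unfold cmap
    split_ifs with h
    · exact (colSeq_eq_self hL hj1 (by omega)).symm
    · rw [fwd_entry a L (by omega) (by omega), show a + (j - a) = j by omega]
  apply list_ext_entry
  · rw [bwd_length, hmlen]
  · intro i hi1 hi2
    rw [bwd_length] at hi2
    rw [bwd_entry _ _ _ hi1 hi2, hflen, show a + (entry L 1 - a) = entry L 1 by omega]
    rw [Finset.filter_congr (fun j hj => by
      simp only [Finset.mem_Icc] at hj
      rw [hcc j hj.1 hj.2])]
    rw [rowcount hL hi1 (by omega)]


/-- Theorem 3.4(3): for `k ≤ 0`, `m > −2k`, `n ≥ m(m+1)/2`, the number of strict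
partitions of `n` with exactly `m` parts and BG-rank `k` equals the number of
`(−2k, m+2k)`-sequences `Δ` with `|Δ| = n − k(2k−1)`. -/
theorem strict_bg_count_case3 (k : ℤ) (m n : ℕ) (hk : k ≤ 0) (hm : -2 * k < (m : ℤ))
    (hn : m * (m + 1) / 2 ≤ n) :
    Set.ncard {L : List ℕ | IsStrictPartition L ∧ L.length = m ∧ L.sum = n ∧
      bgRank L = k} =
    Set.ncard {d : List ℕ | IsABSeq (-2 * k).toNat ((m : ℤ) + 2 * k).toNat d ∧
      (d.sum : ℤ) = (n : ℤ) - k * (2 * k - 1)} := by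
  set s := (-k).toNat with hs
  have hsk : (s : ℤ) = -k := Int.toNat_of_nonneg (by omega)
  set b := ((m:ℤ) + 2*k).toNat with hb
  have hbk : (b : ℤ) = (m:ℤ) + 2*k := Int.toNat_of_nonneg (by omega)
  have ha : (-2*k).toNat = 2*s := by omega
  have hbm : 2*s + b = m := by omega
  have hb1 : 1 ≤ b := by omega
  have hkr : (s:ℤ) * (2*(s:ℤ)+1) = k*(2*k-1) := by rw [hsk]; ring
  have hks : -(s:ℤ) = k := by omega
  rw [ha]
  have himg : {d : List ℕ | IsABSeq (2*s) b d ∧ (d.sum : ℤ) = (n : ℤ) - k * (2 * k - 1)}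
      = fwd (2*s) '' {L : List ℕ | IsStrictPartition L ∧ L.length = m ∧ L.sum = n ∧
        bgRank L = k} := by
    apply Set.Subset.antisymm
    · rintro d ⟨hAB, hdsum⟩
      refine ⟨bwd (2*s) (2*s+b) d, ⟨bwd_sp hAB, ?_, ?_, ?_⟩, fwd_bwd hAB⟩
      · rw [bwd_length]; omega
      · have := bwd_sum hAB
        rw [hdsum, hkr] at this
        have : ((bwd (2*s) (2*s+b) d).sum : ℤ) = (n : ℤ) := by omega
        exact_mod_cast this
      · rw [bwd_bg hAB, hks]
    · rintro _ ⟨L, ⟨hL, hlen, hsum, hbg⟩, rfl⟩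
      have hbg' : bgRank L = -(s:ℤ) := by rw [hbg, hks]
      have hmlen : L.length = 2*s + b := by omega
      obtain ⟨hAB, hsumf⟩ := fwd_mem hL s b hb1 hmlen hbg'
      refine ⟨hAB, ?_⟩
      rw [hsumf, hsum, hkr]
  rw [himg]
  have hinj : Set.InjOn (fwd (2*s)) {L : List ℕ | IsStrictPartition L ∧ L.length = m ∧
      L.sum = n ∧ bgRank L = k} := by
    rintro L1 ⟨hL1, hlen1, _, hbg1⟩ L2 ⟨hL2, hlen2, _, hbg2⟩ heq
    have hbg1' : bgRank L1 = -(s:ℤ) := by rw [hbg1, hks]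
    have hbg2' : bgRank L2 = -(s:ℤ) := by rw [hbg2, hks]
    rw [← bwd_fwd hL1 hb1 (by omega) hbg1', heq, bwd_fwd hL2 hb1 (by omega) hbg2']
  exact (Set.ncard_image_of_injOn hinj).symm
end

section
/- For every nonnegative integer n, the number of strict partitions of n equals the number of ordered pairs (k, μ) where k is a nonnegative integer, μ is a partition all of whose parts are even, and k(k+1)/2 + |μ| = n. That is, the number of partitions of n into distinct parts equals the number of partitions of n into even parts together with precisely one (possibly zero) triangular part. -/
/-- triangular number -/
def Tri : ℕ → ℕ
  | 0 => 0
  | k+1 => Tri k + (k+1)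

lemma Tri_two (k : ℕ) : 2 * Tri k = k * (k+1) := by
  induction k with
  | zero => rfl
  | succ k ih => simp only [Tri]; ring_nf; ring_nf at ih; omega

lemma Tri_eq (k : ℕ) : Tri k = k * (k+1) / 2 := by
  have := Tri_two k; omega

lemma Tri_ge (k : ℕ) : k ≤ Tri k := by
  induction k with
  | zero => simp
  | succ k ih => simp only [Tri]; omega

lemma Tri_succ (k : ℕ) : Tri (k+1) = Tri k + (k+1) := rfl

/-- index of the triangular number attached to BG-rank j -/
def kof (j : ℤ) : ℕ := if 1 ≤ j then (2*j - 1).toNat else (-(2*j)).toNat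

lemma kof_inj : Function.Injective kof := by
  intro a b hab
  unfold kof at hab
  split_ifs at hab <;> omega

/-- the BG statistic of a list -/
def phiL : List ℕ → ℤ
  | [] => 0
  | a :: t => (if Odd a then 1 else 0) - phiL t

/-- count of partitions of `m` with parts `≤ a` and at most `b` parts -/
def bc : ℕ → ℕ → ℕ → ℕ
  | 0, _, m => if m = 0 then 1 else 0
  | _+1, 0, m => if m = 0 then 1 else 0
  | a+1, b+1, m => bc a (b+1) m + (if a+1 ≤ m then bc (a+1) b (m - (a+1)) else 0)

lemma bc_zero_left (b m : ℕ) : bc 0 b m = if m = 0 then 1 else 0 := by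
  cases b <;> simp [bc]

lemma bc_zero_mid (a m : ℕ) : bc a 0 m = if m = 0 then 1 else 0 := by
  cases a <;> simp [bc]

lemma bc_succ (a b m : ℕ) :
    bc (a+1) (b+1) m = bc a (b+1) m + (if a+1 ≤ m then bc (a+1) b (m - (a+1)) else 0) := by
  simp [bc]

lemma bc_zero_sum (a b : ℕ) : bc a b 0 = 1 := by
  induction a with
  | zero => simp [bc_zero_left]
  | succ a ih => cases b with
    | zero => simp [bc_zero_mid]
    | succ b => rw [bc_succ]; simp [ih]

lemma bc_one_mid (a m : ℕ) : bc a 1 m = if m ≤ a then 1 else 0 := by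
  induction a with
  | zero => rw [bc_zero_left]; split_ifs <;> omega
  | succ a ih =>
    rw [bc_succ, ih, bc_zero_mid]
    split_ifs <;> omega


/-- column-strip recursion for `bc` -/
lemma bc_col (a b m : ℕ) :
    bc (a+1) (b+1) m = bc (a+1) b m + (if b+1 ≤ m then bc a (b+1) (m - (b+1)) else 0) := by
  induction a generalizing b m with
  | zero =>
    have h1 : ∀ c m', bc 1 c m' = if m' ≤ c then 1 else 0 := by
      intro c
      induction c with
      | zero => intro m'; rw [bc_zero_mid]; split_ifs <;> omega
      | succ c ihc =>
        intro m'
        rw [bc_succ, ihc, bc_zero_left]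
        split_ifs <;> omega
    rw [h1, h1, bc_zero_left]
    split_ifs <;> omega
  | succ a iha =>
    induction b generalizing m with
    | zero =>
      rw [bc_one_mid, bc_zero_mid, bc_one_mid]
      split_ifs <;> omega
    | succ b ihb =>
      have e1 : bc (a+2) (b+2) m = bc (a+1) (b+2) m + (if a+2 ≤ m then bc (a+2) (b+1) (m - (a+2)) else 0) := bc_succ (a+1) (b+1) m
      have e2 : bc (a+1) (b+2) m = bc (a+1) (b+1) m + (if b+2 ≤ m then bc a (b+2) (m - (b+2)) else 0) := iha (b+1) m
      have e3 : bc (a+2) (b+1) (m - (a+2)) = bc (a+2) b (m - (a+2)) + (if b+1 ≤ m - (a+2) then bc (a+1) (b+1) (m - (a+2) - (b+1)) else 0) := ihb (m - (a+2))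
      have e4 : bc (a+2) (b+1) m = bc (a+1) (b+1) m + (if a+2 ≤ m then bc (a+2) b (m - (a+2)) else 0) := bc_succ (a+1) b m
      have e5 : bc (a+1) (b+2) (m - (b+2)) = bc a (b+2) (m - (b+2)) + (if a+1 ≤ m - (b+2) then bc (a+1) (b+1) (m - (b+2) - (a+1)) else 0) := bc_succ a (b+1) (m - (b+2))
      rw [show (a+1+1 : ℕ) = a+2 from rfl, show (b+1+1 : ℕ) = b+2 from rfl, e1, e2, e3, e4, e5]
      by_cases hm : a + b + 3 ≤ m
      · have c1 : a + 2 ≤ m := by omega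
        have c2 : b + 2 ≤ m := by omega
        have c3 : b + 1 ≤ m - (a+2) := by omega
        have c4 : a + 1 ≤ m - (b+2) := by omega
        have earg : m - (a+2) - (b+1) = m - (b+2) - (a+1) := by omega
        rw [if_pos c1, if_pos c2, if_pos c2, if_pos c3, if_pos c4, if_pos c1, earg]
        ring
      · by_cases c1 : a + 2 ≤ m
        · have c3 : ¬ (b+1 ≤ m - (a+2)) := by omega
          rw [if_pos c1, if_pos c1, if_neg c3, add_zero]
          by_cases c2 : b + 2 ≤ m
          · have c4 : ¬ (a+1 ≤ m - (b+2)) := by omega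
            rw [if_pos c2, if_pos c2, if_neg c4, add_zero]
            ring
          · rw [if_neg c2, if_neg c2]
            ring
        · rw [if_neg c1, if_neg c1, add_zero]
          by_cases c2 : b + 2 ≤ m
          · have c4 : ¬ (a+1 ≤ m - (b+2)) := by omega
            rw [if_pos c2, if_pos c2, if_neg c4, add_zero]
            ring
          · rw [if_neg c2, if_neg c2]

/-- symmetry of the box count -/
lemma bc_symm (a b m : ℕ) : bc a b m = bc b a m := by
  induction a generalizing b m with
  | zero => rw [bc_zero_left, bc_zero_mid]
  | succ a iha =>
    induction b generalizing m with
    | zero => rw [bc_zero_left, bc_zero_mid]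
    | succ b ihb =>
      rw [bc_succ, bc_col b a m, iha (b+1) m, ihb (m - (a+1))]

/-- stability: enlarging a saturated box does not change the count -/
lemma bc_stab_left (a b m : ℕ) (h : m ≤ a) : bc (a+1) b m = bc a b m := by
  cases b with
  | zero => rw [bc_zero_mid, bc_zero_mid]
  | succ b =>
    rw [bc_succ]
    have : ¬ (a + 1 ≤ m) := by omega
    rw [if_neg this, add_zero]

lemma bc_stab (a b a' b' m : ℕ) (ha : m ≤ a) (hb : m ≤ b) (ha' : m ≤ a') (hb' : m ≤ b') :
    bc a b m = bc a' b' m := by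
  have key : ∀ c d m', m' ≤ c → m' ≤ d → bc c d m' = bc m' m' m' := by
    intro c
    induction c with
    | zero => intro d m' h1 h2
              interval_cases m'
              rw [bc_zero_left, bc_zero_sum]
              simp
    | succ c ihc =>
      intro d m' h1 h2
      rcases Nat.lt_or_ge m' (c+1) with h | h
      · rw [bc_stab_left c d m' (by omega)]
        exact ihc d m' (by omega) h2
      · have hm : m' = c + 1 := by omega
        subst hm
        clear h h1
        have key2 : ∀ e, bc (c+1) (c+1+e) (c+1) = bc (c+1) (c+1) (c+1) := by
          intro e
          induction e with
          | zero => rfl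
          | succ e ihe =>
            rw [show c+1+(e+1) = (c+1+e)+1 from rfl, bc_symm (c+1) (c+1+e+1),
               bc_stab_left (c+1+e) (c+1) (c+1) (by omega), bc_symm, ihe]
        have hd : d = c+1 + (d - (c+1)) := by omega
        rw [hd, key2]
  rw [key a b m ha hb, key a' b' m ha' hb']

lemma kof_eq_zero_iff (j : ℤ) : kof j = 0 ↔ j = 0 := by
  unfold kof; split_ifs <;> omega

lemma kof_flip (M : ℕ) (j : ℤ) :
    kof ((if Odd M then 1 else 0) - j) =
      if (M + kof j) % 2 = 1 then kof j + 1 else kof j - 1 := by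
  by_cases h1 : Odd M
  · rw [if_pos h1]
    rw [Nat.odd_iff] at h1
    unfold kof
    split_ifs <;> omega
  · rw [if_neg h1]
    rw [Nat.not_odd_iff_even, Nat.even_iff] at h1
    unfold kof
    split_ifs <;> omega


/-- partitions of `m` with positive parts `≤ a` and at most `b` parts, as sorted lists -/
def Bset (a b m : ℕ) : Set (List ℕ) :=
  {L | L.Pairwise (· ≥ ·) ∧ (∀ x ∈ L, 0 < x ∧ x ≤ a) ∧ L.length ≤ b ∧ L.sum = m}

lemma Bset_sum_zero (a b : ℕ) : Bset a b 0 = {([] : List ℕ)} := by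
  ext L
  simp only [Bset, Set.mem_setOf_eq, Set.mem_singleton_iff]
  constructor
  · rintro ⟨-, h2, -, h4⟩
    cases L with
    | nil => rfl
    | cons x t =>
      exfalso
      have hx := (h2 x (by simp)).1
      have : x ≤ x + t.sum := Nat.le_add_right _ _
      simp [List.sum_cons] at h4
      omega
  · rintro rfl
    refine ⟨List.Pairwise.nil, by simp, by simp, rfl⟩

lemma Bset_a_zero (b m : ℕ) (hm : m ≠ 0) : Bset 0 b m = ∅ := by
  ext L
  simp only [Bset, Set.mem_setOf_eq, Set.mem_empty_iff_false, iff_false]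
  rintro ⟨-, h2, -, h4⟩
  cases L with
  | nil => simp at h4; exact hm h4.symm
  | cons x t => have := h2 x (by simp); omega

lemma Bset_b_zero (a m : ℕ) (hm : m ≠ 0) : Bset a 0 m = ∅ := by
  ext L
  simp only [Bset, Set.mem_setOf_eq, Set.mem_empty_iff_false, iff_false]
  rintro ⟨-, -, h3, h4⟩
  have : L = [] := List.length_eq_zero_iff.mp (Nat.le_zero.mp h3)
  subst this
  simp at h4
  exact hm h4.symm

lemma Bset_small (a b m : ℕ) (h : m < a + 1) :
    Bset (a+1) (b+1) m = Bset a (b+1) m := by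
  ext L
  simp only [Bset, Set.mem_setOf_eq]
  constructor
  · rintro ⟨h1, h2, h3, h4⟩
    refine ⟨h1, fun x hx => ⟨(h2 x hx).1, ?_⟩, h3, h4⟩
    have hxs : x ≤ L.sum := List.single_le_sum (fun y hy => Nat.zero_le y) x hx
    omega
  · rintro ⟨h1, h2, h3, h4⟩
    exact ⟨h1, fun x hx => ⟨(h2 x hx).1, le_trans (h2 x hx).2 (Nat.le_succ a)⟩, h3, h4⟩

lemma Bset_split (a b m : ℕ) (h : a + 1 ≤ m) :
    Bset (a+1) (b+1) m = Bset a (b+1) m ∪ (List.cons (a+1)) '' Bset (a+1) b (m - (a+1)) := by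
  ext L
  simp only [Bset, Set.mem_setOf_eq, Set.mem_union, Set.mem_image]
  constructor
  · rintro ⟨h1, h2, h3, h4⟩
    cases L with
    | nil => exfalso; simp at h4; omega
    | cons x t =>
      rcases List.pairwise_cons.mp h1 with ⟨hx, ht⟩
      by_cases hxa : x = a + 1
      · right
        refine ⟨t, ⟨ht, fun y hy => ⟨(h2 y (by simp [hy])).1, (h2 y (by simp [hy])).2⟩, ?_, ?_⟩, by rw [hxa]⟩
        · simpa using h3
        · simp [List.sum_cons] at h4; omega
      · left
        have hxle : x ≤ a := by have := (h2 x (by simp)).2; omega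
        refine ⟨h1, fun y hy => ⟨(h2 y hy).1, ?_⟩, h3, h4⟩
        rcases List.mem_cons.mp hy with rfl | hyt
        · exact hxle
        · exact le_trans (hx y hyt) hxle
  · rintro (⟨h1, h2, h3, h4⟩ | ⟨t, ⟨h1, h2, h3, h4⟩, rfl⟩)
    · exact ⟨h1, fun x hx => ⟨(h2 x hx).1, le_trans (h2 x hx).2 (Nat.le_succ a)⟩, h3, h4⟩
    · refine ⟨List.pairwise_cons.mpr ⟨fun y hy => (h2 y hy).2, h1⟩,
        fun x hx => ?_, by simpa using h3, by simp [List.sum_cons, h4]; omega⟩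
      rcases List.mem_cons.mp hx with rfl | hxt
      · omega
      · exact h2 x hxt

lemma Bset_disj (a b m : ℕ) :
    Disjoint (Bset a (b+1) m) ((List.cons (a+1)) '' Bset (a+1) b (m - (a+1))) := by
  rw [Set.disjoint_left]
  rintro L ⟨-, h2, -, -⟩ ⟨t, -, rfl⟩
  have := (h2 (a+1) (by simp)).2
  omega

lemma Bset_finite (a : ℕ) : ∀ b m, (Bset a b m).Finite := by
  induction a with
  | zero =>
    intro b m
    rcases Nat.eq_zero_or_pos m with rfl | h
    · rw [Bset_sum_zero]; exact Set.finite_singleton _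
    · rw [Bset_a_zero b m (by omega)]; exact Set.finite_empty
  | succ a iha =>
    intro b
    induction b with
    | zero =>
      intro m
      rcases Nat.eq_zero_or_pos m with rfl | h
      · rw [Bset_sum_zero]; exact Set.finite_singleton _
      · rw [Bset_b_zero _ m (by omega)]; exact Set.finite_empty
    | succ b ihb =>
      intro m
      rcases Nat.lt_or_ge m (a+1) with h | h
      · rw [Bset_small a b m h]; exact iha _ _
      · rw [Bset_split a b m h]
        exact Set.Finite.union (iha _ _) (Set.Finite.image _ (ihb _))

lemma Bset_card (a : ℕ) : ∀ b m, (Bset a b m).ncard = bc a b m := by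
  induction a with
  | zero =>
    intro b m
    rw [bc_zero_left]
    rcases Nat.eq_zero_or_pos m with rfl | h
    · rw [Bset_sum_zero]; simp
    · rw [Bset_a_zero b m (by omega)]; rw [if_neg (by omega)]; simp
  | succ a iha =>
    intro b
    induction b with
    | zero =>
      intro m
      rw [bc_zero_mid]
      rcases Nat.eq_zero_or_pos m with rfl | h
      · rw [Bset_sum_zero]; simp
      · rw [Bset_b_zero _ m (by omega)]; rw [if_neg (by omega)]; simp
    | succ b ihb =>
      intro m
      rw [bc_succ]
      rcases Nat.lt_or_ge m (a+1) with h | h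
      · rw [Bset_small a b m h, if_neg (by omega), add_zero]
        exact iha _ _
      · rw [Bset_split a b m h, if_pos h,
          Set.ncard_union_eq (Bset_disj a b m) (Bset_finite a _ _)
            (Set.Finite.image _ (Bset_finite (a+1) b _)),
          Set.ncard_image_of_injective _ (List.cons_injective), iha, ihb]

/-- partitions of m (all parts), as sorted lists -/
def Pset (m : ℕ) : Set (List ℕ) := {L | L.Pairwise (· ≥ ·) ∧ (∀ x ∈ L, 0 < x) ∧ L.sum = m}

lemma length_le_sum (L : List ℕ) (h : ∀ x ∈ L, 0 < x) : L.length ≤ L.sum := by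
  induction L with
  | nil => simp
  | cons x t ih =>
    simp only [List.length_cons, List.sum_cons]
    have := h x (by simp)
    have := ih (fun y hy => h y (by simp [hy]))
    omega

lemma Pset_eq_Bset (m a b : ℕ) (ha : m ≤ a) (hb : m ≤ b) : Pset m = Bset a b m := by
  ext L
  simp only [Pset, Bset, Set.mem_setOf_eq]
  constructor
  · rintro ⟨h1, h2, h3⟩
    refine ⟨h1, fun x hx => ⟨h2 x hx, ?_⟩, ?_, h3⟩
    · have := List.single_le_sum (fun y _ => Nat.zero_le y) x hx
      omega
    · have := length_le_sum L h2
      omega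
  · rintro ⟨h1, h2, -, h4⟩
    exact ⟨h1, fun x hx => (h2 x hx).1, h4⟩

lemma Pset_card (m : ℕ) : (Pset m).ncard = bc m m m := by
  rw [Pset_eq_Bset m m m le_rfl le_rfl, Bset_card]


lemma Pset_finite' (m : ℕ) : (Pset m).Finite := by
  rw [Pset_eq_Bset m m m le_rfl le_rfl]
  exact Bset_finite m m m

/-- strict partitions of `n` with parts `≤ N` and BG statistic `j` -/
def Qset (N : ℕ) (j : ℤ) (n : ℕ) : Set (List ℕ) :=
  {L | L.Pairwise (· > ·) ∧ (∀ x ∈ L, 0 < x ∧ x ≤ N) ∧ L.sum = n ∧ phiL L = j}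

lemma Qset_zero (j : ℤ) (n : ℕ) :
    Qset 0 j n = if j = 0 ∧ n = 0 then {([] : List ℕ)} else ∅ := by
  ext L
  simp only [Qset, Set.mem_setOf_eq]
  constructor
  · rintro ⟨h1, h2, h3, h4⟩
    have hL : L = [] := by
      cases L with
      | nil => rfl
      | cons x t => exfalso; have := h2 x (by simp); omega
    subst hL
    simp only [phiL] at h4
    simp only [List.sum_nil] at h3
    rw [if_pos ⟨h4.symm, h3.symm⟩]
    rfl
  · intro hL
    split_ifs at hL with h
    · rcases h with ⟨rfl, rfl⟩
      simp only [Set.mem_singleton_iff] at hL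
      subst hL
      exact ⟨List.Pairwise.nil, by simp, rfl, rfl⟩
    · exact absurd hL (Set.notMem_empty L)

lemma Qset_small (N : ℕ) (j : ℤ) (n : ℕ) (h : n < N + 1) :
    Qset (N+1) j n = Qset N j n := by
  ext L
  simp only [Qset, Set.mem_setOf_eq]
  constructor
  · rintro ⟨h1, h2, h3, h4⟩
    refine ⟨h1, fun x hx => ⟨(h2 x hx).1, ?_⟩, h3, h4⟩
    have hxs : x ≤ L.sum := List.single_le_sum (fun y _ => Nat.zero_le y) x hx
    omega
  · rintro ⟨h1, h2, h3, h4⟩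
    exact ⟨h1, fun x hx => ⟨(h2 x hx).1, le_trans (h2 x hx).2 (Nat.le_succ N)⟩, h3, h4⟩

lemma Qset_split (N : ℕ) (j : ℤ) (n : ℕ) (h : N + 1 ≤ n) :
    Qset (N+1) j n = Qset N j n ∪
      (List.cons (N+1)) '' Qset N ((if Odd (N+1) then 1 else 0) - j) (n - (N+1)) := by
  ext L
  simp only [Qset, Set.mem_setOf_eq, Set.mem_union, Set.mem_image]
  constructor
  · rintro ⟨h1, h2, h3, h4⟩
    cases L with
    | nil => exfalso; simp at h3; omega
    | cons x t =>
      rcases List.pairwise_cons.mp h1 with ⟨hx, ht⟩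
      by_cases hxN : x = N + 1
      · right
        refine ⟨t, ⟨ht, fun y hy => ⟨(h2 y (by simp [hy])).1, ?_⟩, ?_, ?_⟩, by rw [hxN]⟩
        · have := hx y hy; omega
        · simp [List.sum_cons] at h3; omega
        · simp only [phiL] at h4; subst hxN; omega
      · left
        have hxle : x ≤ N := by have := (h2 x (by simp)).2; omega
        refine ⟨h1, fun y hy => ⟨(h2 y hy).1, ?_⟩, h3, h4⟩
        rcases List.mem_cons.mp hy with rfl | hyt
        · exact hxle
        · have := hx y hyt; omega
  · rintro (⟨h1, h2, h3, h4⟩ | ⟨t, ⟨h1, h2, h3, h4⟩, rfl⟩)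
    · exact ⟨h1, fun x hx => ⟨(h2 x hx).1, le_trans (h2 x hx).2 (Nat.le_succ N)⟩, h3, h4⟩
    · refine ⟨List.pairwise_cons.mpr ⟨fun y hy => by have := (h2 y hy).2; omega, h1⟩,
        fun x hx => ?_, by simp [List.sum_cons, h3]; omega, ?_⟩
      · rcases List.mem_cons.mp hx with rfl | hxt
        · omega
        · exact ⟨(h2 x hxt).1, le_trans (h2 x hxt).2 (Nat.le_succ N)⟩
      · simp only [phiL]; omega

lemma Qset_disj (N : ℕ) (j j' : ℤ) (n m : ℕ) :
    Disjoint (Qset N j n) ((List.cons (N+1)) '' Qset N j' m) := by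
  rw [Set.disjoint_left]
  rintro L ⟨-, h2, -, -⟩ ⟨t, -, rfl⟩
  have := (h2 (N+1) (by simp)).2
  omega

lemma Qset_finite (N : ℕ) : ∀ (j : ℤ) (n : ℕ), (Qset N j n).Finite := by
  induction N with
  | zero =>
    intro j n
    rw [Qset_zero]
    split_ifs
    · exact Set.finite_singleton _
    · exact Set.finite_empty
  | succ N ih =>
    intro j n
    rcases Nat.lt_or_ge n (N+1) with h | h
    · rw [Qset_small N j n h]; exact ih j n
    · rw [Qset_split N j n h]
      exact Set.Finite.union (ih _ _) (Set.Finite.image _ (ih _ _))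

lemma phiL_abs_le_length (L : List ℕ) : |phiL L| ≤ (L.length : ℤ) := by
  induction L with
  | nil => simp [phiL]
  | cons x t ih =>
    simp only [phiL, List.length_cons]
    have h1 : |(if Odd x then (1:ℤ) else 0) - phiL t| ≤ |(if Odd x then (1:ℤ) else 0)| + |phiL t| := abs_sub _ _
    have h2 : |(if Odd x then (1:ℤ) else 0)| ≤ 1 := by split_ifs <;> simp
    push_cast
    omega

/-- the box-count side, abstract triangular index -/
def EfK (N k n : ℕ) : ℕ :=
  if k ≤ N ∧ Tri k ≤ n ∧ (n - Tri k) % 2 = 0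
  then bc ((N - k)/2) (N - (N - k)/2) ((n - Tri k)/2)
  else 0

lemma EfK_zero (k n : ℕ) : EfK 0 k n = if k = 0 ∧ n = 0 then 1 else 0 := by
  unfold EfK
  by_cases hk : k = 0
  · subst hk
    simp only [Tri, Nat.le_zero, Nat.sub_zero, Nat.zero_div, le_refl, true_and]
    by_cases hn : n % 2 = 0
    · rw [if_pos (by omega), bc_zero_left]
      split_ifs <;> omega
    · rw [if_neg (by omega)]
      split_ifs <;> omega
  · rw [if_neg (by omega), if_neg (by omega)]

lemma EfK_small (N k n : ℕ) (hn : n ≤ N) : EfK (N+1) k n = EfK N k n := by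
  unfold EfK
  have hTk := Tri_ge k
  by_cases h1 : k ≤ N ∧ Tri k ≤ n ∧ (n - Tri k) % 2 = 0
  · rw [if_pos ⟨by omega, h1.2.1, h1.2.2⟩, if_pos h1]
    apply bc_stab <;> omega
  · rw [if_neg h1]
    by_cases h2 : k ≤ N+1 ∧ Tri k ≤ n ∧ (n - Tri k) % 2 = 0
    · exfalso; omega
    · rw [if_neg h2]

lemma EfK_split (N k n : ℕ) (hn : N + 1 ≤ n) :
    EfK (N+1) k n =
      EfK N k n + EfK N (if (N + 1 + k) % 2 = 1 then k + 1 else k - 1) (n - (N+1)) := by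
  have hTk := Tri_ge k
  by_cases hA : k ≥ N + 2
  · have hpar : (N + 1 + k) % 2 = 1 ∨ (N+1+k) % 2 = 0 := by omega
    have e1 : EfK (N+1) k n = 0 := by unfold EfK; rw [if_neg (by omega)]
    have e2 : EfK N k n = 0 := by unfold EfK; rw [if_neg (by omega)]
    have e3 : EfK N (if (N + 1 + k) % 2 = 1 then k + 1 else k - 1) (n - (N+1)) = 0 := by
      unfold EfK
      split_ifs with h h2 h2 <;> first | rfl | (exfalso; omega)
    rw [e1, e2, e3]
  · by_cases hB : k = N + 1
    · subst hB
      have hpar : ¬ ((N + 1 + (N+1)) % 2 = 1) := by omega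
      rw [if_neg hpar]
      have t1 : Tri (N+1) = Tri N + (N+1) := Tri_succ N
      have t2 : (N+1) - 1 = N := by omega
      rw [t2]
      have e1 : EfK (N+1) (N+1) n = if n = Tri (N+1) then 1 else 0 := by
        unfold EfK
        by_cases hg : Tri (N+1) ≤ n ∧ (n - Tri (N+1)) % 2 = 0
        · rw [if_pos ⟨by omega, hg.1, hg.2⟩]
          rw [show (N + 1 - (N+1))/2 = 0 by omega, bc_zero_left]
          split_ifs <;> omega
        · rw [if_neg (by omega)]
          split_ifs with h
          · exfalso; omega
          · rfl
      have e2 : EfK N (N+1) n = 0 := by unfold EfK; rw [if_neg (by omega)]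
      have e3 : EfK N N (n - (N+1)) = if n = Tri (N+1) then 1 else 0 := by
        unfold EfK
        by_cases hg : Tri N ≤ n - (N+1) ∧ (n - (N+1) - Tri N) % 2 = 0
        · rw [if_pos ⟨le_refl N, hg.1, hg.2⟩]
          rw [show (N - N)/2 = 0 by omega, bc_zero_left]
          have hTN := Tri_ge N
          split_ifs <;> omega
        · rw [if_neg (by omega)]
          split_ifs with h
          · exfalso; have hTN := Tri_ge N; omega
          · rfl
      rw [e1, e2, e3]; omega
    · have hkN : k ≤ N := by omega
      by_cases hpar : (N + 1 + k) % 2 = 1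
      · -- case C : k' = k+1
        rw [if_pos hpar]
        have t1 : Tri (k+1) = Tri k + (k+1) := Tri_succ k
        by_cases hC1 : k = N
        · subst hC1
          have e3 : EfK k (k+1) (n - (k+1)) = 0 := by
            unfold EfK; rw [if_neg (by omega)]
          rw [e3, Nat.add_zero]
          unfold EfK
          by_cases hg : Tri k ≤ n ∧ (n - Tri k) % 2 = 0
          · rw [if_pos ⟨by omega, hg.1, hg.2⟩, if_pos ⟨le_refl k, hg.1, hg.2⟩]
            rw [show (k + 1 - k)/2 = 0 by omega, show (k - k)/2 = 0 by omega,
               bc_zero_left, bc_zero_left]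
            omega
          · rw [if_neg (by omega), if_neg (by omega)]
        · -- main case C2
          have hNk : N - k ≥ 2 ∧ (N - k) % 2 = 0 := by omega
          obtain ⟨a, ha⟩ : ∃ a, (N - k)/2 = a + 1 := ⟨(N-k)/2 - 1, by omega⟩
          obtain ⟨b, hb⟩ : ∃ b, N + 1 - (a+1) = b + 1 := ⟨N - a - 1, by omega⟩
          by_cases hg : Tri k ≤ n ∧ (n - Tri k) % 2 = 0
          · have e1 : EfK (N+1) k n = bc (a+1) (b+1) ((n - Tri k)/2) := by
              unfold EfK; rw [if_pos ⟨by omega, hg.1, hg.2⟩]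
              rw [show N + 1 - (N + 1 - k)/2 = b + 1 by omega,
                 show (N + 1 - k)/2 = a + 1 by omega]
            have e2 : EfK N k n = bc (a+1) b ((n - Tri k)/2) := by
              unfold EfK; rw [if_pos ⟨hkN, hg.1, hg.2⟩]
              rw [show N - (N - k)/2 = b by omega, ha]
            have e3 : EfK N (k+1) (n - (N+1)) =
                if b+1 ≤ (n - Tri k)/2 then bc a (b+1) ((n - Tri k)/2 - (b+1)) else 0 := by
              unfold EfK
              by_cases hg' : b+1 ≤ (n - Tri k)/2
              · have c1 : Tri (k+1) ≤ n - (N+1) := by omega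
                have c2 : (n - (N+1) - Tri (k+1)) % 2 = 0 := by omega
                rw [if_pos ⟨by omega, c1, c2⟩, if_pos hg']
                rw [show N - (N - (k+1))/2 = b + 1 by omega,
                   show (N - (k+1))/2 = a by omega,
                   show (n - (N+1) - Tri (k+1))/2 = (n - Tri k)/2 - (b+1) by omega]
              · rw [if_neg (by omega), if_neg hg']
            rw [e1, e2, e3, bc_col a b ((n - Tri k)/2)]
          · have e1 : EfK (N+1) k n = 0 := by unfold EfK; rw [if_neg (by omega)]
            have e2 : EfK N k n = 0 := by unfold EfK; rw [if_neg (by omega)]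
            have e3 : EfK N (k+1) (n - (N+1)) = 0 := by
              unfold EfK; rw [if_neg (by omega)]
            rw [e1, e2, e3]
      · rw [if_neg hpar]
        have hpar' : (N + 1 + k) % 2 = 0 := by omega
        by_cases hD : 1 ≤ k
        · -- case D : k' = k-1
          obtain ⟨c, hc⟩ : ∃ c, k = c + 1 := ⟨k - 1, by omega⟩
          subst hc
          rw [show c + 1 - 1 = c by omega]
          have t1 : Tri (c+1) = Tri c + (c+1) := Tri_succ c
          obtain ⟨a, ha⟩ : ∃ a, (N + 1 - (c+1))/2 = a + 1 := ⟨(N - c)/2 - 1, by omega⟩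
          obtain ⟨b, hb⟩ : ∃ b, N + 1 - (a+1) = b + 1 := ⟨N - a - 1, by omega⟩
          by_cases hg : Tri (c+1) ≤ n ∧ (n - Tri (c+1)) % 2 = 0
          · have e1 : EfK (N+1) (c+1) n = bc (a+1) (b+1) ((n - Tri (c+1))/2) := by
              unfold EfK; rw [if_pos ⟨by omega, hg.1, hg.2⟩]
              rw [show N + 1 - (N + 1 - (c+1))/2 = b + 1 by omega,
                 show (N + 1 - (c+1))/2 = a + 1 by omega]
            have e2 : EfK N (c+1) n = bc a (b+1) ((n - Tri (c+1))/2) := by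
              unfold EfK; rw [if_pos ⟨hkN, hg.1, hg.2⟩]
              rw [show N - (N - (c+1))/2 = b + 1 by omega,
                 show (N - (c+1))/2 = a by omega]
            have e3 : EfK N c (n - (N+1)) =
                if a+1 ≤ (n - Tri (c+1))/2 then bc (a+1) b ((n - Tri (c+1))/2 - (a+1)) else 0 := by
              unfold EfK
              by_cases hg' : a+1 ≤ (n - Tri (c+1))/2
              · have c1 : Tri c ≤ n - (N+1) := by omega
                have c2 : (n - (N+1) - Tri c) % 2 = 0 := by omega
                rw [if_pos ⟨by omega, c1, c2⟩, if_pos hg']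
                rw [show N - (N - c)/2 = b by omega,
                   show (N - c)/2 = a + 1 by omega,
                   show (n - (N+1) - Tri c)/2 = (n - Tri (c+1))/2 - (a+1) by omega]
              · rw [if_neg (by omega), if_neg hg']
            rw [e1, e2, e3, bc_succ a b ((n - Tri (c+1))/2)]
          · have e1 : EfK (N+1) (c+1) n = 0 := by unfold EfK; rw [if_neg (by omega)]
            have e2 : EfK N (c+1) n = 0 := by unfold EfK; rw [if_neg (by omega)]
            have e3 : EfK N c (n - (N+1)) = 0 := by
              unfold EfK; rw [if_neg (by omega)]
            rw [e1, e2, e3]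
        · -- case E : k = 0, N+1 even
          have hk0 : k = 0 := by omega
          subst hk0
          rw [show (0:ℕ) - 1 = 0 by omega]
          have hT0 : Tri 0 = 0 := rfl
          obtain ⟨a, ha⟩ : ∃ a, (N+1)/2 = a + 1 := ⟨(N+1)/2 - 1, by omega⟩
          by_cases hg : n % 2 = 0
          · have hmA : a + 1 ≤ n / 2 := by omega
            have e1 : EfK (N+1) 0 n = bc (a+1) (a+1) (n/2) := by
              unfold EfK; rw [if_pos ⟨by omega, by omega, by omega⟩]
              rw [show N + 1 - (N + 1 - 0)/2 = a + 1 by omega,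
                 show (N + 1 - 0)/2 = a + 1 by omega,
                 show (n - Tri 0)/2 = n/2 by omega]
            have e2 : EfK N 0 n = bc a (a+1) (n/2) := by
              unfold EfK; rw [if_pos ⟨by omega, by omega, by omega⟩]
              rw [show N - (N - 0)/2 = a + 1 by omega,
                 show (N - 0)/2 = a by omega,
                 show (n - Tri 0)/2 = n/2 by omega]
            have e3 : EfK N 0 (n - (N+1)) = bc a (a+1) (n/2 - (a+1)) := by
              unfold EfK; rw [if_pos ⟨by omega, by omega, by omega⟩]
              rw [show N - (N - 0)/2 = a + 1 by omega,
                 show (N - 0)/2 = a by omega,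
                 show (n - (N+1) - Tri 0)/2 = n/2 - (a+1) by omega]
            rw [e1, e2, e3, bc_succ a a (n/2), if_pos hmA, bc_symm (a+1) a]
          · have e1 : EfK (N+1) 0 n = 0 := by unfold EfK; rw [if_neg (by omega)]
            have e2 : EfK N 0 n = 0 := by unfold EfK; rw [if_neg (by omega)]
            have e3 : EfK N 0 (n - (N+1)) = 0 := by
              unfold EfK; rw [if_neg (by omega)]
            rw [e1, e2, e3]

lemma length_le_sum' (L : List ℕ) (h : ∀ x ∈ L, 0 < x) : L.length ≤ L.sum := by
  induction L with
  | nil => simp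
  | cons x t ih =>
    simp only [List.length_cons, List.sum_cons]
    have := h x (by simp)
    have := ih (fun y hy => h y (by simp [hy]))
    omega

/-- master lemma -/
theorem QE (N : ℕ) : ∀ (j : ℤ) (n : ℕ), (Qset N j n).ncard = EfK N (kof j) n := by
  induction N with
  | zero =>
    intro j n
    rw [Qset_zero, EfK_zero]
    by_cases h : j = 0 ∧ n = 0
    · rw [if_pos h, if_pos ⟨(kof_eq_zero_iff j).mpr h.1, h.2⟩, Set.ncard_singleton]
    · rw [if_neg h, if_neg ?_]
      · simp
      · rintro ⟨h1, h2⟩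
        exact h ⟨(kof_eq_zero_iff j).mp h1, h2⟩
  | succ N ih =>
    intro j n
    rcases Nat.lt_or_ge n (N+1) with h | h
    · rw [Qset_small N j n h, ih, EfK_small N _ n (by omega)]
    · rw [Qset_split N j n h,
        Set.ncard_union_eq (Qset_disj N j _ n (n - (N+1))) (Qset_finite N j n)
          ((Qset_finite N _ (n - (N+1))).image _),
        Set.ncard_image_of_injective _ (List.cons_injective), ih, ih, kof_flip,
        EfK_split N _ n h]

/-- ncard of a pairwise-disjoint finite bi-union -/
lemma ncard_biUnion {α β : Type*} [DecidableEq β] (s : Finset β) (f : β → Set α)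
    (hfin : ∀ b ∈ s, (f b).Finite)
    (hdisj : ∀ b₁ ∈ s, ∀ b₂ ∈ s, b₁ ≠ b₂ → Disjoint (f b₁) (f b₂)) :
    (⋃ b ∈ s, f b).ncard = ∑ b ∈ s, (f b).ncard := by
  induction s using Finset.induction with
  | empty => simp
  | @insert a s ha ihs =>
    rw [Finset.sum_insert ha]
    have hun : (⋃ b ∈ insert a s, f b) = f a ∪ ⋃ b ∈ s, f b := by
      simp [Set.biUnion_insert]
    rw [hun, Set.ncard_union_eq ?_ (hfin a (by simp)) ?_,
      ihs (fun b hb => hfin b (by simp [hb]))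
        (fun b₁ h₁ b₂ h₂ hne => hdisj b₁ (by simp [h₁]) b₂ (by simp [h₂]) hne)]
    · rw [Set.disjoint_left]
      rintro x hx hx2
      rw [Set.mem_iUnion₂] at hx2
      obtain ⟨b, hb, hxb⟩ := hx2
      have hab : a ≠ b := by rintro rfl; exact ha hb
      exact (Set.disjoint_left.mp (hdisj a (by simp) b (by simp [hb]) hab)) hx hxb
    · exact Set.Finite.biUnion (s.finite_toSet)
        (fun b hb => hfin b (Finset.mem_insert_of_mem (by simpa using hb)))

/-- LHS count -/
lemma lhs_count (n : ℕ) :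
    {L : List ℕ | IsStrictPartition L ∧ L.sum = n}.ncard =
      ∑ j ∈ Finset.Icc (-(n:ℤ)) n, EfK n (kof j) n := by
  have hset : {L : List ℕ | IsStrictPartition L ∧ L.sum = n} =
      ⋃ j ∈ Finset.Icc (-(n:ℤ)) n, Qset n j n := by
    ext L
    simp only [Set.mem_setOf_eq, Set.mem_iUnion, Finset.mem_Icc, exists_prop]
    constructor
    · rintro ⟨⟨h1, h2⟩, h3⟩
      have habs := phiL_abs_le_length L
      have hlen : L.length ≤ n := h3 ▸ length_le_sum' L h2
      have hlen' : (L.length : ℤ) ≤ (n : ℤ) := by exact_mod_cast hlen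
      rw [abs_le] at habs
      refine ⟨phiL L, ⟨by omega, by omega⟩, h1, fun x hx => ⟨h2 x hx, ?_⟩, h3, rfl⟩
      have := List.single_le_sum (fun y (_ : y ∈ L) => Nat.zero_le y) x hx
      omega
    · rintro ⟨j, -, h1, h2, h3, -⟩
      exact ⟨⟨h1, fun x hx => (h2 x hx).1⟩, h3⟩
  rw [hset, ncard_biUnion _ _ (fun j _ => Qset_finite n j n) ?_]
  · exact Finset.sum_congr rfl (fun j _ => QE n j n)
  · rintro j₁ - j₂ - hne
    rw [Set.disjoint_left]
    rintro L ⟨-, -, -, hp1⟩ ⟨-, -, -, hp2⟩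
    exact hne (hp1 ▸ hp2 ▸ rfl)

/-- even partitions of w -/
def ESet (w : ℕ) : Set (List ℕ) :=
  {μ | IsPartitionList μ ∧ (∀ x ∈ μ, Even x) ∧ μ.sum = w}

lemma sum_map_half (mu : List ℕ) (h : ∀ x ∈ mu, Even x) :
    (mu.map (fun x => x / 2)).sum * 2 = mu.sum := by
  induction mu with
  | nil => simp
  | cons x t ih =>
    simp only [List.map_cons, List.sum_cons]
    obtain ⟨c, hc⟩ := h x (by simp)
    have := ih (fun y hy => h y (by simp [hy]))
    omega

lemma sum_map_double (pi : List ℕ) : (pi.map (fun x => 2 * x)).sum = 2 * pi.sum := by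
  induction pi with
  | nil => simp
  | cons x t ih =>
    simp only [List.map_cons, List.sum_cons]
    omega

lemma even_list_sum (L : List ℕ) (h : ∀ x ∈ L, Even x) : L.sum % 2 = 0 := by
  induction L with
  | nil => simp
  | cons x t ih =>
    simp only [List.sum_cons]
    have h1 := h x (by simp)
    have h2 := ih (fun y hy => h y (by simp [hy]))
    rcases h1 with ⟨c, hc⟩
    omega

lemma ESet_eq_image (w : ℕ) (hw : w % 2 = 0) :
    ESet w = (List.map (fun x => 2 * x)) '' Pset (w/2) := by
  ext μ
  simp only [ESet, Pset, IsPartitionList, Set.mem_setOf_eq, Set.mem_image]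
  constructor
  · rintro ⟨⟨h1, h2⟩, h3, h4⟩
    refine ⟨μ.map (fun x => x / 2), ⟨?_, ?_, ?_⟩, ?_⟩
    · exact List.Pairwise.map _ (fun a b hab => Nat.div_le_div_right hab) h1
    · intro x hx
      rw [List.mem_map] at hx
      obtain ⟨y, hy, rfl⟩ := hx
      have hy1 := h2 y hy
      obtain ⟨c, hc⟩ := h3 y hy
      omega
    · have := sum_map_half μ h3
      omega
    · rw [List.map_map]
      have : ∀ x ∈ μ, ((fun x => 2 * x) ∘ fun x => x / 2) x = id x := by
        intro x hx
        obtain ⟨c, hc⟩ := h3 x hx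
        simp [Function.comp]
        omega
      rw [List.map_congr_left this, List.map_id]
  · rintro ⟨π, ⟨h1, h2, h3⟩, rfl⟩
    refine ⟨⟨?_, ?_⟩, ?_, ?_⟩
    · exact List.Pairwise.map _ (fun a b hab => by omega) h1
    · intro x hx
      rw [List.mem_map] at hx
      obtain ⟨y, hy, rfl⟩ := hx
      have := h2 y hy
      omega
    · intro x hx
      rw [List.mem_map] at hx
      obtain ⟨y, hy, rfl⟩ := hx
      exact ⟨y, by omega⟩
    · have := sum_map_double π
      omega

lemma ESet_empty (w : ℕ) (hw : w % 2 = 1) : ESet w = ∅ := by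
  ext μ
  simp only [ESet, Set.mem_setOf_eq, Set.mem_empty_iff_false, iff_false]
  rintro ⟨-, h3, h4⟩
  have := even_list_sum μ h3
  omega

lemma ESet_card (w : ℕ) :
    (ESet w).ncard = if w % 2 = 0 then bc (w/2) (w/2) (w/2) else 0 := by
  by_cases hw : w % 2 = 0
  · rw [if_pos hw, ESet_eq_image w hw,
      Set.ncard_image_of_injective _ (List.map_injective_iff.mpr (fun a b hab => by omega)),
      Pset_card]
  · rw [if_neg hw, ESet_empty w (by omega)]
    simp

lemma ESet_finite (w : ℕ) : (ESet w).Finite := by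
  by_cases hw : w % 2 = 0
  · rw [ESet_eq_image w hw]; exact (Pset_finite' _).image _
  · rw [ESet_empty w (by omega)]; exact Set.finite_empty

/-- RHS count -/
lemma rhs_count (n : ℕ) :
    {p : ℕ × List ℕ | IsPartitionList p.2 ∧ (∀ x ∈ p.2, Even x) ∧
      p.1 * (p.1 + 1) / 2 + p.2.sum = n}.ncard =
      ∑ k ∈ Finset.range (n+1), EfK n k n := by
  classical
  set s : Finset ℕ := (Finset.range (n+1)).filter
    (fun k => Tri k ≤ n ∧ (n - Tri k) % 2 = 0) with hs
  have hset : {p : ℕ × List ℕ | IsPartitionList p.2 ∧ (∀ x ∈ p.2, Even x) ∧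
      p.1 * (p.1 + 1) / 2 + p.2.sum = n} =
      ⋃ k ∈ s, (Prod.mk k) '' ESet (n - Tri k) := by
    ext p
    obtain ⟨k, μ⟩ := p
    simp only [Set.mem_setOf_eq, Set.mem_iUnion, hs, Finset.mem_filter,
      Finset.mem_range, exists_prop, Set.mem_image]
    constructor
    · rintro ⟨h1, h2, h3⟩
      rw [← Tri_eq] at h3
      have hTk := Tri_ge k
      have hpar := even_list_sum μ h2
      refine ⟨k, ⟨by omega, by omega, by omega⟩, μ, ⟨h1, h2, by omega⟩, rfl⟩
    · rintro ⟨k', ⟨hk1, hk2, hk3⟩, μ', ⟨h1, h2, h3⟩, hp⟩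
      obtain ⟨rfl, rfl⟩ : k' = k ∧ μ' = μ := by
        constructor <;> [exact congrArg Prod.fst hp; exact congrArg Prod.snd hp]
      rw [← Tri_eq]
      exact ⟨h1, h2, by omega⟩
  rw [hset, ncard_biUnion _ _
      (fun k _ => (ESet_finite _).image _) ?_]
  · rw [Finset.sum_filter]
    apply Finset.sum_congr rfl
    intro k hk
    rw [Finset.mem_range] at hk
    by_cases hg : Tri k ≤ n ∧ (n - Tri k) % 2 = 0
    · rw [if_pos hg,
        Set.ncard_image_of_injective _ (fun a b hab => (Prod.mk.injEq _ _ _ _).mp hab |>.2),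
        ESet_card, if_pos hg.2]
      unfold EfK
      rw [if_pos ⟨by omega, hg.1, hg.2⟩]
      have hTk := Tri_ge k
      apply bc_stab <;> omega
    · rw [if_neg hg]
      unfold EfK
      rw [if_neg (by omega)]
  · rintro k₁ - k₂ - hne
    rw [Set.disjoint_left]
    rintro p ⟨μ₁, -, rfl⟩ ⟨μ₂, -, hp⟩
    exact hne (congrArg Prod.fst hp).symm

/-- reindexing the j-sum to the k-sum -/
lemma sum_reindex (n : ℕ) :
    ∑ j ∈ Finset.Icc (-(n:ℤ)) n, EfK n (kof j) n = ∑ k ∈ Finset.range (n+1), EfK n k n := by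
  classical
  have h1 : ∑ k ∈ (Finset.Icc (-(n:ℤ)) n).image kof, EfK n k n =
      ∑ j ∈ Finset.Icc (-(n:ℤ)) n, EfK n (kof j) n :=
    Finset.sum_image (fun x _ y _ h => kof_inj h)
  rw [← h1]
  apply (Finset.sum_subset ?_ ?_).symm
  · -- range (n+1) ⊆ image kof (Icc)
    intro k hk
    rw [Finset.mem_range] at hk
    rw [Finset.mem_image]
    by_cases hpar : k % 2 = 1
    · refine ⟨((k:ℤ) + 1)/2, ?_, ?_⟩
      · rw [Finset.mem_Icc]; constructor <;> [omega; omega]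
      · unfold kof; rw [if_pos (by omega)]; omega
    · refine ⟨-((k:ℤ)/2), ?_, ?_⟩
      · rw [Finset.mem_Icc]; constructor <;> [omega; omega]
      · unfold kof
        rcases Nat.eq_zero_or_pos k with rfl | hk0
        · rw [if_neg (by omega)]; omega
        · rw [if_neg (by omega)]; omega
  · -- terms outside range(n+1) vanish
    intro k hk1 hk2
    rw [Finset.mem_range] at hk2
    unfold EfK
    rw [if_neg (by omega)]



/-- Corollary 3.6 (Vandervelde): the number of strict partitions of `n` equals the number
of pairs `(k, μ)` where `μ` is a partition into even parts and `k(k+1)/2 + |μ| = n`,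
i.e. partitions of `n` into even parts together with precisely one triangular part. -/
theorem strict_eq_even_plus_triangular (n : ℕ) :
    Set.ncard {L : List ℕ | IsStrictPartition L ∧ L.sum = n} =
    Set.ncard {p : ℕ × List ℕ | IsPartitionList p.2 ∧ (∀ x ∈ p.2, Even x) ∧
      p.1 * (p.1 + 1) / 2 + p.2.sum = n} := by
  rw [lhs_count, rhs_count, sum_reindex]
end
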